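/- arXiv:2304.12992 — 8 statements merged into one kernel-verified Lean document; each statement's English description precedes it below -/
import Mathlib

section
/- Let A ∈ ℝ^{m×n}, let k ≥ 1, and let 𝒜 ∈ ℝ^{(k+1)m×(kn+m)} be the k-commodity constraint matrix built from A. Let d₁,…,d_{k+1} ∈ ℝ^m be vectors, D_i = diag(d_i), D_Σ = Σ_{i=1}^{k+1} D_i, and let D ∈ ℝ^{(k+1)m×(k+1)m} be the block-diagonal matrix with diagonal blocks D₁,…,D_{k+1}. Then 𝒜ᵀ D 𝒜 equals the block matrix whose (i,j) block for 1 ≤ i,j ≤ k is Aᵀ D_i A if i = j and 0 otherwise, whose (i, k+1) block for 1 ≤ i ≤ k is Aᵀ D_i, whose (k+1, j) block for 1 ≤ j ≤ k is D_j A, and whose (k+1, k+1) block is D_Σ. -/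
open Matrix

/-- The `k`-commodity constraint matrix built from `A ∈ ℝ^{m×n}`.
Rows are indexed by pairs `(i, e)` with `i ∈ Fin (k+1)`, `e ∈ Fin m`; columns are indexed
by pairs `(j, v)` with `j ∈ Fin k`, `v ∈ Fin n`, together with indices `e' ∈ Fin m`.
The entry at `((i,e),(j,v))` is `A e v` if `i = j` (as naturals) and `0` otherwise, and the
entry at `((i,e), e')` is `1` if `e = e'` and `0` otherwise. -/
def commodityMatrix {m n : ℕ} (k : ℕ) (A : Matrix (Fin m) (Fin n) ℝ) :
    Matrix (Fin (k + 1) × Fin m) ((Fin k × Fin n) ⊕ Fin m) ℝ :=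
  Matrix.of fun p q =>
    match q with
    | Sum.inl (j, v) => if (p.1 : ℕ) = (j : ℕ) then A p.2 v else 0
    | Sum.inr e' => if p.2 = e' then 1 else 0

lemma coe_eq_castSucc' {k : ℕ} (a : Fin (k+1)) (i : Fin k) :
    ((a : ℕ) = (i : ℕ)) = (a = i.castSucc) := by
  simp [Fin.ext_iff]

/-- block structure of `𝒜ᵀ D 𝒜` for the `k`-commodity constraint matrix `𝒜`
and the block-diagonal matrix `D` with diagonal blocks `diag(d₁), …, diag(d_{k+1})`. -/
theorem commodity_gram_blocks {m n k : ℕ} (hk : 1 ≤ k)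
    (A : Matrix (Fin m) (Fin n) ℝ) (d : Fin (k + 1) → Fin m → ℝ) :
    (commodityMatrix k A)ᵀ *
        Matrix.diagonal (fun p : Fin (k + 1) × Fin m => d p.1 p.2) *
        commodityMatrix k A =
      Matrix.of fun p q =>
        match p, q with
        | Sum.inl (i, v), Sum.inl (j, v') =>
            if i = j then (Aᵀ * Matrix.diagonal (d i.castSucc) * A) v v' else 0
        | Sum.inl (i, v), Sum.inr e =>
            (Aᵀ * Matrix.diagonal (d i.castSucc)) v e
        | Sum.inr e, Sum.inl (j, v) =>
            (Matrix.diagonal (d j.castSucc) * A) e v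
        | Sum.inr e, Sum.inr e' =>
            Matrix.diagonal (fun e'' : Fin m => ∑ i, d i e'') e e' := by
  ext p q
  rcases p with ⟨i, v⟩ | e <;> rcases q with ⟨j, v'⟩ | e' <;>
    simp [commodityMatrix, Matrix.mul_apply, Matrix.diagonal_apply,
      Fintype.sum_prod_type, coe_eq_castSucc', ite_and,
      Finset.sum_ite_eq, Finset.sum_ite_eq', mul_comm, Fin.castSucc_inj,
      Finset.mul_sum, Finset.sum_mul, mul_ite, ite_mul]
  · split_ifs <;> simp_all
  · split_ifs <;> simp
end

section
/- Let A ∈ ℝ^{m×n} have linearly independent columns, let k ≥ 1, and let 𝒜 ∈ ℝ^{(k+1)m×(kn+m)} be the k-commodity constraint matrix built from A. Let d₁,…,d_{k+1} ∈ ℝ^m be entrywise positive vectors, D_i = diag(d_i), D_Σ = Σ_{i=1}^{k+1} D_i, and let D ∈ ℝ^{(k+1)m×(k+1)m} be the block-diagonal matrix with diagonal blocks D₁,…,D_{k+1}. Define E ∈ ℝ^{kn×kn} as the k×k block matrix whose (i,j) block is (Aᵀ D_i A if i = j, else 0) − Aᵀ D_i D_Σ⁻¹ D_j A. Then 𝒜ᵀ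 D 𝒜 and E are invertible, and (𝒜ᵀ D 𝒜)⁻¹ = L · diag(E⁻¹, I_m) · R, where L ∈ ℝ^{(kn+m)×(kn+m)} is the block lower-triangular matrix with identity blocks I_n on the first k diagonal positions, I_m on the last diagonal position, and bottom blocks −D_Σ⁻¹ D_j A in the (k+1, j) position for 1 ≤ j ≤ k, and R ∈ ℝ^{(kn+m)×(kn+m)} is the block upper-triangular matrix with identity blocks I_n on the first k diagonal positions, D_Σ⁻¹ on the last diagonal position, and right-column blocks −Aᵀ D_i D_Σ⁻¹ in the (i, k+1) position for 1 ≤ i ≤ k. -/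
open Matrix

/-- The `kn × kn` Schur-complement matrix `E`: its `(i,j)` block is
`(Aᵀ D_i A if i = j, else 0) − Aᵀ D_i D_Σ⁻¹ D_j A`, where `D_i = diag(d_i)` and
`D_Σ = diag(∑ i, d_i)`. -/
noncomputable def schurE {m n : ℕ} (k : ℕ) (A : Matrix (Fin m) (Fin n) ℝ)
    (d : Fin (k + 1) → Fin m → ℝ) : Matrix (Fin k × Fin n) (Fin k × Fin n) ℝ :=
  Matrix.of fun p q =>
    (if p.1 = q.1 then (Aᵀ * Matrix.diagonal (d p.1.castSucc) * A) p.2 q.2 else 0) -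
      (Aᵀ * Matrix.diagonal (d p.1.castSucc) *
        (Matrix.diagonal fun e : Fin m => ∑ i, d i e)⁻¹ *
        Matrix.diagonal (d q.1.castSucc) * A) p.2 q.2


namespace CommodityAux

variable {m n k : ℕ}

noncomputable def sV {m k : ℕ} (d : Fin (k + 1) → Fin m → ℝ) : Fin m → ℝ := fun e => ∑ i, d i e

def CM (A : Matrix (Fin m) (Fin n) ℝ) (d : Fin (k + 1) → Fin m → ℝ) :
    Matrix (Fin k × Fin n) (Fin m) ℝ :=
  Matrix.of fun p e => A e p.2 * d p.1.castSucc e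

def BdM (A : Matrix (Fin m) (Fin n) ℝ) (d : Fin (k + 1) → Fin m → ℝ) :
    Matrix (Fin k × Fin n) (Fin k × Fin n) ℝ :=
  Matrix.of fun p q =>
    if p.1 = q.1 then ∑ e, A e p.2 * d p.1.castSucc e * A e q.2 else 0

lemma sV_pos (d : Fin (k + 1) → Fin m → ℝ) (hd : ∀ i e, 0 < d i e) (e : Fin m) : 0 < sV d e :=
  Finset.sum_pos (fun i _ => hd i e) Finset.univ_nonempty

lemma diag_s_inv (d : Fin (k + 1) → Fin m → ℝ) (hd : ∀ i e, 0 < d i e) :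
    (Matrix.diagonal fun e : Fin m => ∑ i, d i e)⁻¹ =
      Matrix.diagonal fun e => (sV d e)⁻¹ := by
  apply Matrix.inv_eq_right_inv
  rw [Matrix.diagonal_mul_diagonal]
  ext i j
  rcases eq_or_ne i j with h | h
  · subst h
    have hs := (sV_pos d hd i).ne'
    simp only [sV] at hs
    simp [Matrix.diagonal_apply_eq, Matrix.one_apply_eq, sV, mul_inv_cancel₀ hs]
  · simp [Matrix.diagonal_apply_ne _ h, Matrix.one_apply_ne h]

lemma schurE_eq (A : Matrix (Fin m) (Fin n) ℝ) (d : Fin (k + 1) → Fin m → ℝ)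
    (hd : ∀ i e, 0 < d i e) :
    schurE k A d = BdM A d - CM A d * Matrix.diagonal (fun e => (sV d e)⁻¹) * (CM A d)ᵀ := by
  ext p q
  simp only [schurE, BdM, CM, diag_s_inv d hd, Matrix.sub_apply, Matrix.of_apply,
    Matrix.mul_apply, Matrix.mul_diagonal, Matrix.diagonal_mul, Matrix.transpose_apply,
    Matrix.diagonal_apply, ite_mul, mul_ite, mul_zero, zero_mul, Finset.sum_ite_eq, Finset.sum_ite_eq',
    Finset.mem_univ, if_true]
  congr 1
  exact Finset.sum_congr rfl fun e _ => by ring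

lemma coe_eq_iff (i' : Fin (k + 1)) (i : Fin k) :
    ((i' : ℕ) = (i : ℕ)) ↔ i' = i.castSucc := by
  constructor
  · intro h; exact Fin.ext (by simpa using h)
  · rintro rfl; simp

lemma M_eq (A : Matrix (Fin m) (Fin n) ℝ) (d : Fin (k + 1) → Fin m → ℝ) :
    (commodityMatrix k A)ᵀ *
        Matrix.diagonal (fun p : Fin (k + 1) × Fin m => d p.1 p.2) * commodityMatrix k A =
      Matrix.fromBlocks (BdM A d) (CM A d) (CM A d)ᵀ (Matrix.diagonal (sV d)) := by
  ext p q
  rcases p with (⟨i, u⟩ | e) <;> rcases q with (⟨j, v⟩ | e') <;>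
    simp [Matrix.mul_apply, Matrix.mul_diagonal, commodityMatrix,
      Fintype.sum_prod_type, coe_eq_iff, BdM, CM, sV, Matrix.diagonal_apply,
      ite_mul, mul_ite, Finset.sum_ite_eq, Finset.sum_ite_eq', Fin.castSucc_inj]
  · rcases eq_or_ne i j with h | h
    · subst h; simp
    · simp [h, Ne.symm h]
  · ring
  · rcases eq_or_ne e e' with h | h
    · subst h; simp
    · simp [h, Ne.symm h]

section Quadratic

variable (A : Matrix (Fin m) (Fin n) ℝ) (d : Fin (k + 1) → Fin m → ℝ)

/-- quadratic form of `Aᵀ D A` -/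
lemma quad_diag (w : Fin m → ℝ) (v : Fin n → ℝ) :
    v ⬝ᵥ ((Aᵀ * Matrix.diagonal w * A) *ᵥ v) = ∑ e, w e * (A *ᵥ v) e ^ 2 := by
  rw [← Matrix.mulVec_mulVec, ← Matrix.mulVec_mulVec, Matrix.dotProduct_mulVec,
    Matrix.vecMul_transpose]
  simp [Matrix.mulVec_diagonal, dotProduct, sq, mul_comm, mul_assoc, mul_left_comm]

lemma quad_Bd (x : Fin k × Fin n → ℝ) :
    x ⬝ᵥ (BdM A d *ᵥ x) =
      ∑ e, ∑ i : Fin k, d i.castSucc e * ((A *ᵥ fun u => x (i, u)) e) ^ 2 := by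
  rw [Finset.sum_comm]
  have hblock : ∀ p : Fin k × Fin n, (BdM A d *ᵥ x) p =
      ((Aᵀ * Matrix.diagonal (d p.1.castSucc) * A) *ᵥ fun u => x (p.1, u)) p.2 := by
    rintro ⟨i, u⟩
    simp only [BdM, Matrix.mulVec, dotProduct, Fintype.sum_prod_type, Matrix.of_apply,
      ite_mul, zero_mul, Finset.sum_ite_eq, Finset.mem_univ, if_true]
    simp [Matrix.mul_apply, Matrix.mul_diagonal, Matrix.diagonal_apply, ite_mul, mul_ite,
      zero_mul, mul_zero, Finset.sum_ite_eq, Finset.sum_ite_eq', Finset.sum_mul,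
      Finset.mul_sum]
  calc x ⬝ᵥ (BdM A d *ᵥ x)
      = ∑ i : Fin k, (fun u => x (i, u)) ⬝ᵥ
          ((Aᵀ * Matrix.diagonal (d i.castSucc) * A) *ᵥ fun u => x (i, u)) := by
        simp only [dotProduct, Fintype.sum_prod_type]
        exact Finset.sum_congr rfl fun i _ => Finset.sum_congr rfl fun u _ => by
          rw [hblock ⟨i, u⟩]
    _ = ∑ i : Fin k, ∑ e, d i.castSucc e * ((A *ᵥ fun u => x (i, u)) e) ^ 2 :=
        Finset.sum_congr rfl fun i _ => quad_diag A _ _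

lemma CMt_mulVec (x : Fin k × Fin n → ℝ) (e : Fin m) :
    ((CM A d)ᵀ *ᵥ x) e = ∑ i : Fin k, d i.castSucc e * (A *ᵥ fun u => x (i, u)) e := by
  simp only [Matrix.mulVec, dotProduct, Matrix.transpose_apply, CM, Matrix.of_apply,
    Fintype.sum_prod_type, Finset.mul_sum]
  exact Finset.sum_congr rfl fun i _ => Finset.sum_congr rfl fun u _ => by ring

lemma quad_CS (x : Fin k × Fin n → ℝ) :
    x ⬝ᵥ ((CM A d * Matrix.diagonal (fun e => (sV d e)⁻¹) * (CM A d)ᵀ) *ᵥ x) =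
      ∑ e, (sV d e)⁻¹ * (((CM A d)ᵀ *ᵥ x) e) ^ 2 := by
  rw [← Matrix.mulVec_mulVec, ← Matrix.mulVec_mulVec, Matrix.dotProduct_mulVec,
    ← Matrix.mulVec_transpose]
  simp [Matrix.mulVec_diagonal, dotProduct, sq, mul_comm, mul_assoc, mul_left_comm]

lemma quad_E (hd : ∀ i e, 0 < d i e) (x : Fin k × Fin n → ℝ) :
    x ⬝ᵥ (schurE k A d *ᵥ x) =
      ∑ e, ((∑ i : Fin k, d i.castSucc e * ((A *ᵥ fun u => x (i, u)) e) ^ 2) -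
        (sV d e)⁻¹ * (∑ i : Fin k, d i.castSucc e * (A *ᵥ fun u => x (i, u)) e) ^ 2) := by
  rw [schurE_eq A d hd, Matrix.sub_mulVec, dotProduct_sub, quad_Bd, quad_CS,
    ← Finset.sum_sub_distrib]
  refine Finset.sum_congr rfl fun e _ => ?_
  rw [CMt_mulVec]

end Quadratic

lemma per_e (d : Fin (k + 1) → Fin m → ℝ) (hd : ∀ i e, 0 < d i e) (e : Fin m)
    (c : Fin k → ℝ) :
    ((sV d e)⁻¹ * (∑ i : Fin k, d i.castSucc e * c i) ^ 2 ≤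
      ∑ i : Fin k, d i.castSucc e * c i ^ 2) ∧
    (∀ i₀, c i₀ ≠ 0 → (sV d e)⁻¹ * (∑ i : Fin k, d i.castSucc e * c i) ^ 2 <
      ∑ i : Fin k, d i.castSucc e * c i ^ 2) := by
  have hs := sV_pos d hd e
  set t := ∑ i : Fin k, d i.castSucc e with ht
  set a := ∑ i : Fin k, d i.castSucc e * c i ^ 2 with ha'
  have ha : 0 ≤ a := Finset.sum_nonneg fun i _ => mul_nonneg (hd _ _).le (sq_nonneg _)
  have hcs : (∑ i : Fin k, d i.castSucc e * c i) ^ 2 ≤ t * a := by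
    have h := Finset.sum_mul_sq_le_sq_mul_sq Finset.univ
      (fun i : Fin k => Real.sqrt (d i.castSucc e))
      (fun i : Fin k => Real.sqrt (d i.castSucc e) * c i)
    have e1 : ∀ i : Fin k, Real.sqrt (d i.castSucc e) * (Real.sqrt (d i.castSucc e) * c i) =
        d i.castSucc e * c i := fun i => by
      rw [← mul_assoc, Real.mul_self_sqrt (hd _ _).le]
    have e2 : ∀ i : Fin k, Real.sqrt (d i.castSucc e) ^ 2 = d i.castSucc e := fun i =>
      Real.sq_sqrt (hd _ _).le
    have e3 : ∀ i : Fin k, (Real.sqrt (d i.castSucc e) * c i) ^ 2 =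
        d i.castSucc e * c i ^ 2 := fun i => by rw [mul_pow, e2]
    calc (∑ i : Fin k, d i.castSucc e * c i) ^ 2
        = (∑ i : Fin k, Real.sqrt (d i.castSucc e) *
            (Real.sqrt (d i.castSucc e) * c i)) ^ 2 := by
          rw [Finset.sum_congr rfl fun i _ => (e1 i).symm]
      _ ≤ (∑ i : Fin k, Real.sqrt (d i.castSucc e) ^ 2) *
            ∑ i : Fin k, (Real.sqrt (d i.castSucc e) * c i) ^ 2 := h
      _ = t * a := by
          rw [Finset.sum_congr rfl fun i _ => e2 i, Finset.sum_congr rfl fun i _ => e3 i]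
  have hts : t < sV d e := by
    have hsum : sV d e = t + d (Fin.last k) e := by
      simp [sV, ht, Fin.sum_univ_castSucc]
    have := hd (Fin.last k) e
    linarith
  have hle : ∀ b : ℝ, b ≤ t * a → (sV d e)⁻¹ * b ≤ a := by
    intro b hb
    have h1 : (sV d e)⁻¹ * b ≤ (sV d e)⁻¹ * (t * a) :=
      mul_le_mul_of_nonneg_left hb (inv_nonneg.2 hs.le)
    have h2 : t * a ≤ sV d e * a := mul_le_mul_of_nonneg_right hts.le ha
    have h3 : (sV d e)⁻¹ * (t * a) ≤ (sV d e)⁻¹ * (sV d e * a) :=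
      mul_le_mul_of_nonneg_left h2 (inv_nonneg.2 hs.le)
    have h4 : (sV d e)⁻¹ * (sV d e * a) = a := by
      rw [← mul_assoc, inv_mul_cancel₀ hs.ne', one_mul]
    linarith
  refine ⟨hle _ hcs, fun i₀ hi₀ => ?_⟩
  have hapos : 0 < a :=
    Finset.sum_pos' (fun i _ => mul_nonneg (hd _ _).le (sq_nonneg _))
      ⟨i₀, Finset.mem_univ _, mul_pos (hd _ _) (by positivity)⟩
  have h1 : (sV d e)⁻¹ * (∑ i : Fin k, d i.castSucc e * c i) ^ 2 ≤ (sV d e)⁻¹ * (t * a) :=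
    mul_le_mul_of_nonneg_left hcs (inv_nonneg.2 hs.le)
  have h2 : (sV d e)⁻¹ * (t * a) < (sV d e)⁻¹ * (sV d e * a) :=
    mul_lt_mul_of_pos_left (mul_lt_mul_of_pos_right hts hapos) (inv_pos.2 hs)
  have h4 : (sV d e)⁻¹ * (sV d e * a) = a := by
    rw [← mul_assoc, inv_mul_cancel₀ hs.ne', one_mul]
  linarith

lemma E_posdef (A : Matrix (Fin m) (Fin n) ℝ)
    (hA : ∀ y : Fin n → ℝ, A *ᵥ y = 0 → y = 0)
    (d : Fin (k + 1) → Fin m → ℝ) (hd : ∀ i e, 0 < d i e) :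
    (schurE k A d).PosDef := by
  rw [Matrix.posDef_iff_dotProduct_mulVec]
  constructor
  · rw [Matrix.IsHermitian]
    ext p q
    obtain ⟨i, u⟩ := p
    obtain ⟨j, v⟩ := q
    rw [Matrix.conjTranspose_apply, star_trivial, schurE_eq A d hd]
    simp only [Matrix.sub_apply, BdM, CM, Matrix.of_apply, Matrix.mul_apply,
      Matrix.mul_diagonal, Matrix.transpose_apply, Matrix.diagonal_apply,
      ite_mul, mul_ite, mul_zero, zero_mul, Finset.sum_ite_eq, Finset.sum_ite_eq',
      Finset.mem_univ, if_true]
    rcases eq_or_ne i j with h | h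
    · subst h
      rw [if_pos rfl, if_pos rfl]
      congr 1
      · exact Finset.sum_congr rfl fun e _ => by ring
      · exact Finset.sum_congr rfl fun e _ => by ring
    · rw [if_neg (by simpa using h.symm), if_neg (by simpa using h)]
      congr 1
      exact Finset.sum_congr rfl fun e _ => by ring
  · intro x hx
    have hstar : star x = x := funext fun _ => star_trivial _
    rw [hstar, quad_E A d hd x]
    obtain ⟨⟨i₀, u₀⟩, hp⟩ := Function.ne_iff.mp hx
    have h1 : (A *ᵥ fun u => x (i₀, u)) ≠ 0 := fun h => hp (congrFun (hA _ h) u₀)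
    obtain ⟨e₀, he₀⟩ := Function.ne_iff.mp h1
    apply Finset.sum_pos'
    · intro e _
      exact sub_nonneg.mpr
        (per_e d hd e (fun i => (A *ᵥ fun u => x (i, u)) e)).1
    · refine ⟨e₀, Finset.mem_univ _, ?_⟩
      have := (per_e d hd e₀ (fun i => (A *ᵥ fun u => x (i, u)) e₀)).2 i₀ he₀
      simpa using sub_pos.mpr this

section Fact

variable (A : Matrix (Fin m) (Fin n) ℝ) (d : Fin (k + 1) → Fin m → ℝ)

noncomputable def FM : Matrix (Fin k × Fin n) (Fin m) ℝ :=
  CM A d * Matrix.diagonal fun e => (sV d e)⁻¹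

noncomputable def GM : Matrix (Fin m) (Fin k × Fin n) ℝ :=
  (Matrix.diagonal fun e => (sV d e)⁻¹) * (CM A d)ᵀ

lemma dinv_mul (hd : ∀ i e, 0 < d i e) :
    (Matrix.diagonal fun e => (sV d e)⁻¹) * Matrix.diagonal (sV d) = 1 := by
  rw [Matrix.diagonal_mul_diagonal]
  ext i j
  rcases eq_or_ne i j with h | h
  · subst h
    simp [Matrix.diagonal_apply_eq, Matrix.one_apply_eq,
      inv_mul_cancel₀ (sV_pos d hd i).ne']
  · simp [Matrix.diagonal_apply_ne _ h, Matrix.one_apply_ne h]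

lemma mul_dinv (hd : ∀ i e, 0 < d i e) :
    Matrix.diagonal (sV d) * (Matrix.diagonal fun e => (sV d e)⁻¹) = 1 := by
  rw [Matrix.diagonal_mul_diagonal]
  ext i j
  rcases eq_or_ne i j with h | h
  · subst h
    simp [Matrix.diagonal_apply_eq, Matrix.one_apply_eq,
      mul_inv_cancel₀ (sV_pos d hd i).ne']
  · simp [Matrix.diagonal_apply_ne _ h, Matrix.one_apply_ne h]

lemma FM_DS (hd : ∀ i e, 0 < d i e) : FM A d * Matrix.diagonal (sV d) = CM A d := by
  rw [FM, Matrix.mul_assoc, dinv_mul d hd, Matrix.mul_one]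

lemma DS_GM (hd : ∀ i e, 0 < d i e) : Matrix.diagonal (sV d) * GM A d = (CM A d)ᵀ := by
  rw [GM, ← Matrix.mul_assoc, mul_dinv d hd, Matrix.one_mul]

lemma E_plus (hd : ∀ i e, 0 < d i e) :
    schurE k A d + CM A d * GM A d = BdM A d := by
  rw [GM, schurE_eq A d hd, ← Matrix.mul_assoc]
  exact sub_add_cancel _ _

lemma fact (hd : ∀ i e, 0 < d i e) :
    (commodityMatrix k A)ᵀ *
        Matrix.diagonal (fun p : Fin (k + 1) × Fin m => d p.1 p.2) * commodityMatrix k A =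
      Matrix.fromBlocks 1 (FM A d) 0 1 *
        Matrix.fromBlocks (schurE k A d) 0 0 (Matrix.diagonal (sV d)) *
        Matrix.fromBlocks 1 0 (GM A d) 1 := by
  rw [M_eq, Matrix.fromBlocks_multiply, Matrix.fromBlocks_multiply]
  simp only [Matrix.one_mul, Matrix.mul_one, Matrix.zero_mul, Matrix.mul_zero,
    add_zero, zero_add, Matrix.mul_zero, Matrix.zero_mul]
  rw [FM_DS A d hd, DS_GM A d hd, E_plus A d hd]

lemma triple_right_inv {N : Type*} [Fintype N] [DecidableEq N]
    (P B Q P' B' Q' : Matrix N N ℝ)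
    (hP : P * P' = 1) (hB : B * B' = 1) (hQ : Q * Q' = 1) :
    (P * B * Q) * (Q' * (B' * P')) = 1 := by
  rw [← Matrix.mul_assoc (P * B * Q) Q' (B' * P'), Matrix.mul_assoc (P * B) Q Q', hQ,
    Matrix.mul_one, ← Matrix.mul_assoc, Matrix.mul_assoc P B B', hB, Matrix.mul_one, hP]

end Fact

end CommodityAux

open CommodityAux

/-- if `A` has linearly independent columns and each `d_i` is entrywise
positive, then `𝒜ᵀ D 𝒜` and `E` are invertible, and
`(𝒜ᵀ D 𝒜)⁻¹ = L * diag(E⁻¹, I_m) * R` where `L` is block lower-triangular with identity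
diagonal blocks and bottom blocks `−D_Σ⁻¹ D_j A`, and `R` is block upper-triangular with
identity blocks on the first `k` diagonal positions, `D_Σ⁻¹` on the last, and
right-column blocks `−Aᵀ D_i D_Σ⁻¹`. -/
theorem commodity_gram_inverse {m n k : ℕ} (hk : 1 ≤ k)
    (A : Matrix (Fin m) (Fin n) ℝ)
    (hA : ∀ y : Fin n → ℝ, A *ᵥ y = 0 → y = 0)
    (d : Fin (k + 1) → Fin m → ℝ) (hd : ∀ i e, 0 < d i e) :
    IsUnit ((commodityMatrix k A)ᵀ *
        Matrix.diagonal (fun p : Fin (k + 1) × Fin m => d p.1 p.2) * commodityMatrix k A) ∧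
    IsUnit (schurE k A d) ∧
    ((commodityMatrix k A)ᵀ *
          Matrix.diagonal (fun p : Fin (k + 1) × Fin m => d p.1 p.2) *
          commodityMatrix k A)⁻¹ =
      Matrix.fromBlocks 1 0
          (Matrix.of fun (e : Fin m) (q : Fin k × Fin n) =>
            -(((Matrix.diagonal fun e' : Fin m => ∑ i, d i e')⁻¹ *
                Matrix.diagonal (d q.1.castSucc) * A) e q.2)) 1 *
        Matrix.fromBlocks (schurE k A d)⁻¹ 0 0 1 *
        Matrix.fromBlocks 1
          (Matrix.of fun (p : Fin k × Fin n) (e : Fin m) =>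
            -((Aᵀ * Matrix.diagonal (d p.1.castSucc) *
                (Matrix.diagonal fun e' : Fin m => ∑ i, d i e')⁻¹) p.2 e)) 0
          (Matrix.diagonal fun e' : Fin m => ∑ i, d i e')⁻¹ := by
  have hE : (schurE k A d).PosDef := E_posdef A hA d hd
  have hEunit : IsUnit (schurE k A d) := hE.isUnit
  have hEdet : IsUnit (schurE k A d).det := (Matrix.isUnit_iff_isUnit_det _).1 hEunit
  -- the factors
  set P : Matrix ((Fin k × Fin n) ⊕ Fin m) ((Fin k × Fin n) ⊕ Fin m) ℝ :=
    Matrix.fromBlocks 1 (FM A d) 0 1 with hP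
  set B : Matrix ((Fin k × Fin n) ⊕ Fin m) ((Fin k × Fin n) ⊕ Fin m) ℝ :=
    Matrix.fromBlocks (schurE k A d) 0 0 (Matrix.diagonal (sV d)) with hB
  set Q : Matrix ((Fin k × Fin n) ⊕ Fin m) ((Fin k × Fin n) ⊕ Fin m) ℝ :=
    Matrix.fromBlocks 1 0 (GM A d) 1 with hQ
  set P' : Matrix ((Fin k × Fin n) ⊕ Fin m) ((Fin k × Fin n) ⊕ Fin m) ℝ :=
    Matrix.fromBlocks 1 (-(FM A d)) 0 1 with hP'
  set B' : Matrix ((Fin k × Fin n) ⊕ Fin m) ((Fin k × Fin n) ⊕ Fin m) ℝ :=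
    Matrix.fromBlocks (schurE k A d)⁻¹ 0 0 (Matrix.diagonal fun e => (sV d e)⁻¹) with hB'
  set Q' : Matrix ((Fin k × Fin n) ⊕ Fin m) ((Fin k × Fin n) ⊕ Fin m) ℝ :=
    Matrix.fromBlocks 1 0 (-(GM A d)) 1 with hQ'
  have hPP : P * P' = 1 := by
    rw [hP, hP', Matrix.fromBlocks_multiply]
    simp [Matrix.fromBlocks_one]
  have hBB : B * B' = 1 := by
    rw [hB, hB', Matrix.fromBlocks_multiply]
    rw [Matrix.mul_nonsing_inv _ hEdet, mul_dinv d hd]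
    simp [Matrix.fromBlocks_one]
  have hQQ : Q * Q' = 1 := by
    rw [hQ, hQ', Matrix.fromBlocks_multiply]
    simp [Matrix.fromBlocks_one]
  have hfact := fact A d hd
  have hright : ((commodityMatrix k A)ᵀ *
      Matrix.diagonal (fun p : Fin (k + 1) × Fin m => d p.1 p.2) * commodityMatrix k A) *
      (Q' * (B' * P')) = 1 := by
    rw [hfact]
    exact triple_right_inv P B Q P' B' Q' hPP hBB hQQ
  refine ⟨(Matrix.isUnit_iff_isUnit_det _).2 (Matrix.isUnit_det_of_right_inverse hright), hEunit, ?_⟩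
  rw [Matrix.inv_eq_right_inv hright]
  -- identify the stated factors with Q', B', P'
  have hblockL : (Matrix.of fun (e : Fin m) (q : Fin k × Fin n) =>
      -(((Matrix.diagonal fun e' : Fin m => ∑ i, d i e')⁻¹ *
          Matrix.diagonal (d q.1.castSucc) * A) e q.2)) = -(GM A d) := by
    ext e q
    rw [diag_s_inv d hd]
    simp only [Matrix.of_apply, Matrix.neg_apply, GM, Matrix.mul_apply,
      Matrix.diagonal_mul, Matrix.mul_diagonal, Matrix.transpose_apply, CM,
      Matrix.diagonal_apply, ite_mul, mul_ite, mul_zero, zero_mul,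
      Finset.sum_ite_eq, Finset.sum_ite_eq', Finset.mem_univ, if_true]
    ring
  have hL : Matrix.fromBlocks (1 : Matrix (Fin k × Fin n) (Fin k × Fin n) ℝ)
      (0 : Matrix (Fin k × Fin n) (Fin m) ℝ)
      (Matrix.of fun (e : Fin m) (q : Fin k × Fin n) =>
        -(((Matrix.diagonal fun e' : Fin m => ∑ i, d i e')⁻¹ *
            Matrix.diagonal (d q.1.castSucc) * A) e q.2))
      (1 : Matrix (Fin m) (Fin m) ℝ) = Q' := by
    rw [hblockL, hQ']
  have hR : Matrix.fromBlocks (1 : Matrix (Fin k × Fin n) (Fin k × Fin n) ℝ)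
      (Matrix.of fun (p : Fin k × Fin n) (e : Fin m) =>
        -((Aᵀ * Matrix.diagonal (d p.1.castSucc) *
            (Matrix.diagonal fun e' : Fin m => ∑ i, d i e')⁻¹) p.2 e))
      (0 : Matrix (Fin m) (Fin k × Fin n) ℝ)
      (Matrix.diagonal fun e' : Fin m => ∑ i, d i e')⁻¹ =
      Matrix.fromBlocks 1 (-(FM A d)) 0 (Matrix.diagonal fun e => (sV d e)⁻¹) := by
    have hblockR : (Matrix.of fun (p : Fin k × Fin n) (e : Fin m) =>
        -((Aᵀ * Matrix.diagonal (d p.1.castSucc) *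
            (Matrix.diagonal fun e' : Fin m => ∑ i, d i e')⁻¹) p.2 e)) = -(FM A d) := by
      ext p e
      rw [diag_s_inv d hd]
      simp only [Matrix.of_apply, Matrix.neg_apply, FM, Matrix.mul_apply,
        Matrix.mul_diagonal, Matrix.diagonal_mul, Matrix.transpose_apply, CM,
        Matrix.diagonal_apply, ite_mul, mul_ite, mul_zero, zero_mul,
        Finset.sum_ite_eq, Finset.sum_ite_eq', Finset.mem_univ, if_true]
      try ring
    rw [hblockR, diag_s_inv d hd]
  rw [hL, hR]
  have hmid : Matrix.fromBlocks (schurE k A d)⁻¹ (0 : Matrix (Fin k × Fin n) (Fin m) ℝ)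
      (0 : Matrix (Fin m) (Fin k × Fin n) ℝ) (1 : Matrix (Fin m) (Fin m) ℝ) *
      Matrix.fromBlocks 1 (-(FM A d)) 0 (Matrix.diagonal fun e => (sV d e)⁻¹) =
      B' * P' := by
    rw [hB', hP', Matrix.fromBlocks_multiply, Matrix.fromBlocks_multiply]
    simp
  rw [Matrix.mul_assoc, hmid]
end

section
/- Let A ∈ ℝ^{m×n} have linearly independent columns, let k ≥ 1, and let 𝒜 ∈ ℝ^{(k+1)m×(kn+m)} be the k-commodity constraint matrix built from A. Let x̄ = (x̄₁,…,x̄_{k+1}) and s̄ = (s̄₁,…,s̄_{k+1}) be entrywise positive vectors in ℝ^{(k+1)m} (each block in ℝ^m), and let g = (g₁,…,g_{k+1}) ∈ ℝ^{(k+1)m}. Set D_i = diag(x̄_i/s̄_i) for i = 1,…,k+1, D_Σ = Σ_{i=1}^{k+1} D_i, X̄ = diag(x̄), S̄ = diag(s̄), and let E ∈ ℝ^{kn×kn} be the k×k block matrix whose (i,j) block is (Aᵀ D_i A if i = j, else 0) − Aᵀ D_i D_Σ⁻¹ D_j A. Define w = D_Σ⁻¹ Σ_{i=1}^{k+1} diag(s̄_i)⁻¹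 g_i ∈ ℝ^m and (v₁,…,v_k) = E⁻¹ applied to the stacked vector whose i-th block is Aᵀ(diag(s̄_i)⁻¹ g_i − D_i w) for i = 1,…,k. Then the vector 𝒜 (𝒜ᵀ X̄ S̄⁻¹ 𝒜)⁻¹ 𝒜ᵀ S̄⁻¹ g ∈ ℝ^{(k+1)m} has its i-th block equal to w + A v_i − Σ_{j=1}^{k} D_j D_Σ⁻¹ A v_j for i = 1,…,k, and its (k+1)-th block equal to w − Σ_{j=1}^{k} D_j D_Σ⁻¹ A v_j. -/
open Matrix

lemma cm_diag_inv {ι : Type*} [Fintype ι] [DecidableEq ι] (g : ι → ℝ) (hg : ∀ e, g e ≠ 0) :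
    (Matrix.diagonal g)⁻¹ = Matrix.diagonal (fun e => (g e)⁻¹) := by
  apply Matrix.inv_eq_right_inv
  have : (fun e => g e * (g e)⁻¹) = fun _ => (1 : ℝ) := funext fun e => mul_inv_cancel₀ (hg e)
  rw [Matrix.diagonal_mul_diagonal, this, Matrix.diagonal_one]

lemma cm_mulVec_castSucc {m n k : ℕ} (A : Matrix (Fin m) (Fin n) ℝ)
    (u : (Fin k × Fin n) ⊕ Fin m → ℝ) (j : Fin k) (e : Fin m) :
    (commodityMatrix k A *ᵥ u) (j.castSucc, e) =
      (A *ᵥ fun vv => u (Sum.inl (j, vv))) e + u (Sum.inr e) := by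
  simp only [commodityMatrix, Matrix.mulVec, dotProduct, Fintype.sum_sum_type,
    Fintype.sum_prod_type, Matrix.of_apply, Fin.coe_castSucc, Fin.val_eq_val]
  simp [Finset.sum_ite_eq, Matrix.mulVec, dotProduct, ite_mul, Finset.sum_ite_eq']

lemma cm_mulVec_last {m n k : ℕ} (A : Matrix (Fin m) (Fin n) ℝ)
    (u : (Fin k × Fin n) ⊕ Fin m → ℝ) (e : Fin m) :
    (commodityMatrix k A *ᵥ u) (Fin.last k, e) = u (Sum.inr e) := by
  simp only [commodityMatrix, Matrix.mulVec, dotProduct, Fintype.sum_sum_type,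
    Fintype.sum_prod_type, Matrix.of_apply]
  have h1 : ∀ x : Fin k, k ≠ (x : ℕ) := fun x => Nat.ne_of_gt x.2
  simp [h1, Finset.sum_ite_eq, ite_mul]

lemma cm_tmulVec_inl {m n k : ℕ} (A : Matrix (Fin m) (Fin n) ℝ)
    (z : Fin (k + 1) × Fin m → ℝ) (j : Fin k) (vv : Fin n) :
    ((commodityMatrix k A)ᵀ *ᵥ z) (Sum.inl (j, vv)) =
      (Aᵀ *ᵥ fun e => z (j.castSucc, e)) vv := by
  have h1 : ∀ i : Fin (k+1), ((i : ℕ) = (j : ℕ)) = (i = j.castSucc) := by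
    intro i; simp [Fin.ext_iff]
  simp only [commodityMatrix, Matrix.mulVec, dotProduct, Fintype.sum_prod_type,
    Matrix.transpose_apply, Matrix.of_apply, h1]
  simp [Finset.sum_ite_eq', ite_mul, Matrix.mulVec, dotProduct, mul_comm]

lemma cm_tmulVec_inr {m n k : ℕ} (A : Matrix (Fin m) (Fin n) ℝ)
    (z : Fin (k + 1) × Fin m → ℝ) (e : Fin m) :
    ((commodityMatrix k A)ᵀ *ᵥ z) (Sum.inr e) = ∑ i, z (i, e) := by
  simp only [commodityMatrix, Matrix.mulVec, dotProduct, Fintype.sum_prod_type,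
    Matrix.transpose_apply, Matrix.of_apply]
  simp [Finset.sum_ite_eq, ite_mul]

lemma cm_inj {m n k : ℕ} (A : Matrix (Fin m) (Fin n) ℝ)
    (hA : ∀ y : Fin n → ℝ, A *ᵥ y = 0 → y = 0)
    (u : (Fin k × Fin n) ⊕ Fin m → ℝ) (hu : commodityMatrix k A *ᵥ u = 0) : u = 0 := by
  have hr : ∀ e, u (Sum.inr e) = 0 := by
    intro e
    have := congrFun hu (Fin.last k, e)
    rwa [cm_mulVec_last] at this
  have hl : ∀ j : Fin k, (fun vv => u (Sum.inl (j, vv))) = 0 := by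
    intro j
    apply hA
    funext e
    have := congrFun hu (j.castSucc, e)
    rw [cm_mulVec_castSucc, hr e] at this
    simpa using this
  funext q
  match q with
  | Sum.inl (j, vv) => exact congrFun (hl j) vv
  | Sum.inr e => exact hr e

lemma cm_M_inj {m n k : ℕ} (A : Matrix (Fin m) (Fin n) ℝ)
    (hA : ∀ y : Fin n → ℝ, A *ᵥ y = 0 → y = 0)
    (dd : Fin (k + 1) × Fin m → ℝ) (hdd : ∀ p, 0 < dd p)
    (y : (Fin k × Fin n) ⊕ Fin m → ℝ)
    (hy : ((commodityMatrix k A)ᵀ * Matrix.diagonal dd * commodityMatrix k A) *ᵥ y = 0) :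
    y = 0 := by
  set 𝒜 := commodityMatrix k A
  have h0 : y ⬝ᵥ ((𝒜ᵀ * Matrix.diagonal dd * 𝒜) *ᵥ y) = 0 := by rw [hy]; simp
  rw [← Matrix.mulVec_mulVec, ← Matrix.mulVec_mulVec, dotProduct_mulVec,
    Matrix.vecMul_transpose] at h0
  set z := 𝒜 *ᵥ y with hz
  have h1 : z ⬝ᵥ (Matrix.diagonal dd *ᵥ z) = ∑ p, dd p * (z p * z p) := by
    simp only [dotProduct, Matrix.mulVec_diagonal]
    exact Finset.sum_congr rfl fun p _ => by ring
  rw [h1] at h0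
  have hzero : ∀ p ∈ Finset.univ, dd p * (z p * z p) = 0 := by
    rw [← Finset.sum_eq_zero_iff_of_nonneg]
    · exact h0
    · intro p _
      exact mul_nonneg (hdd p).le (mul_self_nonneg _)
  have hz0 : z = 0 := by
    funext p
    have := hzero p (Finset.mem_univ p)
    have := (mul_eq_zero.1 this).resolve_left (ne_of_gt (hdd p))
    exact (mul_self_eq_zero).1 this
  exact cm_inj A hA y hz0

lemma cm_M_isUnit {m n k : ℕ} (A : Matrix (Fin m) (Fin n) ℝ)
    (hA : ∀ y : Fin n → ℝ, A *ᵥ y = 0 → y = 0)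
    (dd : Fin (k + 1) × Fin m → ℝ) (hdd : ∀ p, 0 < dd p) :
    IsUnit ((commodityMatrix k A)ᵀ * Matrix.diagonal dd * commodityMatrix k A).det := by
  rw [isUnit_iff_ne_zero]
  intro hdet
  obtain ⟨y, hy0, hy⟩ := (Matrix.exists_mulVec_eq_zero_iff).2 hdet
  exact hy0 (cm_M_inj A hA dd hdd y hy)


lemma cm_AtDA {m n : ℕ} (A : Matrix (Fin m) (Fin n) ℝ) (c : Fin m → ℝ) (p q : Fin n) :
    (Aᵀ * Matrix.diagonal c * A) p q = ∑ e, A e p * (c e * A e q) := by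
  rw [Matrix.mul_assoc]
  simp only [Matrix.mul_apply, Matrix.diagonal_apply, ite_mul, zero_mul, Finset.sum_ite_eq,
    Finset.mem_univ, if_true, Matrix.transpose_apply]

lemma cm_sum_swap {m n : ℕ} (A : Matrix (Fin m) (Fin n) ℝ) (c : Fin m → ℝ)
    (y : Fin n → ℝ) (vv : Fin n) :
    ∑ uu, (∑ e, A e vv * (c e * A e uu)) * y uu = ∑ e, A e vv * (c e * (A *ᵥ y) e) := by
  simp only [Finset.sum_mul]
  rw [Finset.sum_comm]
  refine Finset.sum_congr rfl fun e _ => ?_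
  simp only [Matrix.mulVec, dotProduct, Finset.mul_sum]
  exact Finset.sum_congr rfl fun uu _ => by ring

lemma cm_schurE_mulVec {m n k : ℕ} (A : Matrix (Fin m) (Fin n) ℝ)
    (d : Fin (k + 1) → Fin m → ℝ) (hd : ∀ e, (∑ i, d i e) ≠ 0)
    (x : Fin k × Fin n → ℝ) (j : Fin k) (vv : Fin n) :
    (schurE k A d *ᵥ x) (j, vv) =
      ∑ e, A e vv * (d j.castSucc e *
        ((A *ᵥ fun u => x (j, u)) e -
          (∑ i, d i e)⁻¹ * ∑ l : Fin k, d l.castSucc e * (A *ᵥ fun u => x (l, u)) e)) := by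
  have hdia : (Matrix.diagonal fun e : Fin m => ∑ i, d i e)⁻¹ =
      Matrix.diagonal fun e => (∑ i, d i e)⁻¹ := cm_diag_inv _ hd
  simp only [Matrix.mulVec, dotProduct, Fintype.sum_prod_type, schurE, Matrix.of_apply,
    hdia, sub_mul, Finset.sum_sub_distrib, ite_mul, zero_mul]
  have h1 : (∑ l : Fin k, ∑ uu : Fin n, if j = l then (Aᵀ * Matrix.diagonal (d j.castSucc) * A) vv uu * x (l, uu) else 0)
      = ∑ e, A e vv * (d j.castSucc e * (A *ᵥ fun u => x (j, u)) e) := by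
    have pull : ∀ l : Fin k, (∑ uu, if j = l then (Aᵀ * Matrix.diagonal (d j.castSucc) * A) vv uu * x (l, uu) else 0) =
        if j = l then ∑ uu, (Aᵀ * Matrix.diagonal (d j.castSucc) * A) vv uu * x (l, uu) else 0 := by
      intro l; split <;> simp
    rw [Finset.sum_congr rfl fun l _ => pull l,
      Finset.sum_ite_eq Finset.univ j fun l => ∑ uu, (Aᵀ * Matrix.diagonal (d j.castSucc) * A) vv uu * x (l, uu)]
    simp only [Finset.mem_univ, if_true]
    have h0 : ∀ uu, (Aᵀ * Matrix.diagonal (d j.castSucc) * A) vv uu * x (j, uu) =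
        (∑ e, A e vv * (d j.castSucc e * A e uu)) * x (j, uu) := by
      intro uu; rw [cm_AtDA]
    rw [Finset.sum_congr rfl fun uu _ => h0 uu, cm_sum_swap]
  have key : ∀ l : Fin k,
      ∑ uu, (Aᵀ * Matrix.diagonal (d j.castSucc) *
          (Matrix.diagonal fun e => (∑ i, d i e)⁻¹) * Matrix.diagonal (d l.castSucc) * A) vv uu
          * x (l, uu) =
        ∑ e, A e vv * ((d j.castSucc e * (∑ i, d i e)⁻¹ * d l.castSucc e) *
          (A *ᵥ fun u => x (l, u)) e) := by
    intro l
    have hcomb : Aᵀ * Matrix.diagonal (d j.castSucc) *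
        (Matrix.diagonal fun e => (∑ i, d i e)⁻¹) * Matrix.diagonal (d l.castSucc) =
        Aᵀ * Matrix.diagonal (fun e => d j.castSucc e * (∑ i, d i e)⁻¹ * d l.castSucc e) := by
      rw [Matrix.mul_assoc, Matrix.mul_assoc, Matrix.diagonal_mul_diagonal,
        Matrix.diagonal_mul_diagonal]
      congr 1
      funext e
      ring
    rw [hcomb]
    have h2 : ∀ uu, (Aᵀ * Matrix.diagonal (fun e => d j.castSucc e * (∑ i, d i e)⁻¹ * d l.castSucc e) * A) vv uu * x (l, uu) =
        (∑ e, A e vv * ((d j.castSucc e * (∑ i, d i e)⁻¹ * d l.castSucc e) * A e uu)) * x (l, uu) := by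
      intro uu; rw [cm_AtDA]
    rw [Finset.sum_congr rfl fun uu _ => h2 uu, cm_sum_swap]
  rw [h1, Finset.sum_congr rfl fun l _ => key l, Finset.sum_comm, ← Finset.sum_sub_distrib]
  simp only [Matrix.mulVec, dotProduct]
  refine Finset.sum_congr rfl fun e _ => ?_
  rw [mul_sub, mul_sub]
  congr 1
  simp only [Finset.mul_sum]
  exact Finset.sum_congr rfl fun l _ => Finset.sum_congr rfl fun uu _ => by ring

lemma cm_E_inj {m n k : ℕ} (A : Matrix (Fin m) (Fin n) ℝ)
    (hA : ∀ y : Fin n → ℝ, A *ᵥ y = 0 → y = 0)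
    (d : Fin (k + 1) → Fin m → ℝ) (hd : ∀ i e, 0 < d i e)
    (x : Fin k × Fin n → ℝ) (hx : schurE k A d *ᵥ x = 0) : x = 0 := by
  have hds : ∀ e, (0:ℝ) < ∑ i, d i e := fun e =>
    Finset.sum_pos (fun i _ => hd i e) ⟨Fin.last k, Finset.mem_univ _⟩
  have hds' : ∀ e, (∑ i, d i e) ≠ 0 := fun e => (hds e).ne'
  set av : Fin k → Fin m → ℝ := fun l e => (A *ᵥ fun uu => x (l, uu)) e with hav
  set uinr : Fin m → ℝ :=
    fun e => -((∑ i, d i e)⁻¹ * ∑ l : Fin k, d l.castSucc e * av l e) with huinr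
  set u : (Fin k × Fin n) ⊕ Fin m → ℝ := Sum.elim x uinr with hu
  have hMu : ((commodityMatrix k A)ᵀ *
      Matrix.diagonal (fun p : Fin (k+1) × Fin m => d p.1 p.2) * commodityMatrix k A) *ᵥ u
      = 0 := by
    rw [← Matrix.mulVec_mulVec, ← Matrix.mulVec_mulVec]
    funext q
    match q with
    | Sum.inl (j, vv) =>
      rw [cm_tmulVec_inl]
      have hz : ∀ e, (Matrix.diagonal (fun p : Fin (k+1) × Fin m => d p.1 p.2) *ᵥ
          (commodityMatrix k A *ᵥ u)) (j.castSucc, e) =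
          d j.castSucc e * (av j e + uinr e) := by
        intro e
        rw [Matrix.mulVec_diagonal, cm_mulVec_castSucc]
        rfl
      have h2 : (Aᵀ *ᵥ fun e => (Matrix.diagonal (fun p : Fin (k+1) × Fin m => d p.1 p.2) *ᵥ
          (commodityMatrix k A *ᵥ u)) (j.castSucc, e)) vv =
          ∑ e, A e vv * (d j.castSucc e * (av j e + uinr e)) := by
        simp only [Matrix.mulVec, dotProduct, Matrix.transpose_apply]
        exact Finset.sum_congr rfl fun e _ => by rw [← hz e]; rfl
      rw [h2]
      have h3 := congrFun hx (j, vv)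
      rw [cm_schurE_mulVec A d hds' x j vv] at h3
      simp only [Pi.zero_apply] at h3 ⊢
      rw [← h3]
      exact Finset.sum_congr rfl fun e _ => by rw [huinr]; ring
    | Sum.inr e =>
      rw [cm_tmulVec_inr]
      have hzc : ∀ i : Fin (k+1), (Matrix.diagonal (fun p : Fin (k+1) × Fin m => d p.1 p.2) *ᵥ
          (commodityMatrix k A *ᵥ u)) (i, e) = d i e * (commodityMatrix k A *ᵥ u) (i, e) := by
        intro i; rw [Matrix.mulVec_diagonal]
      simp only [hzc]
      rw [Fin.sum_univ_castSucc]
      have hcs : ∀ j : Fin k, (commodityMatrix k A *ᵥ u) (j.castSucc, e) = av j e + uinr e := by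
        intro j; rw [cm_mulVec_castSucc]; rfl
      have hlast : (commodityMatrix k A *ᵥ u) (Fin.last k, e) = uinr e := by
        rw [cm_mulVec_last]; rfl
      simp only [hcs, hlast, Pi.zero_apply]
      have expand : ∑ j : Fin k, d j.castSucc e * (av j e + uinr e) =
          (∑ j : Fin k, d j.castSucc e * av j e) + (∑ j : Fin k, d j.castSucc e) * uinr e := by
        rw [Finset.sum_mul, ← Finset.sum_add_distrib]
        exact Finset.sum_congr rfl fun j _ => by ring
      rw [expand]
      have hsum : (∑ j : Fin k, d j.castSucc e) + d (Fin.last k) e = ∑ i, d i e := by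
        rw [Fin.sum_univ_castSucc]
      have : (∑ i, d i e) * uinr e = -(∑ l : Fin k, d l.castSucc e * av l e) := by
        rw [huinr]
        field_simp
        rw [mul_div_cancel_left₀ _ (hds' e)]
      linear_combination this + uinr e * hsum
  have hu0 := cm_M_inj A hA _ (fun p => hd p.1 p.2) u hMu
  funext p
  exact congrFun hu0 (Sum.inl p)

lemma cm_E_isUnit {m n k : ℕ} (A : Matrix (Fin m) (Fin n) ℝ)
    (hA : ∀ y : Fin n → ℝ, A *ᵥ y = 0 → y = 0)
    (d : Fin (k + 1) → Fin m → ℝ) (hd : ∀ i e, 0 < d i e) :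
    IsUnit (schurE k A d).det := by
  rw [isUnit_iff_ne_zero]
  intro hdet
  obtain ⟨y, hy0, hy⟩ := (Matrix.exists_mulVec_eq_zero_iff).2 hdet
  exact hy0 (cm_E_inj A hA d hd y hy)

lemma cm_DDinvA_mulVec {m n : ℕ} (f gg : Fin m → ℝ) (hg : ∀ e, gg e ≠ 0)
    (A : Matrix (Fin m) (Fin n) ℝ) (y : Fin n → ℝ) (e : Fin m) :
    ((Matrix.diagonal f * (Matrix.diagonal gg)⁻¹ * A) *ᵥ y) e =
      f e * (gg e)⁻¹ * (A *ᵥ y) e := by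
  rw [cm_diag_inv gg hg, Matrix.diagonal_mul_diagonal, ← Matrix.mulVec_mulVec,
    Matrix.mulVec_diagonal]

lemma cm_main {m n k : ℕ} (A : Matrix (Fin m) (Fin n) ℝ)
    (d : Fin (k + 1) → Fin m → ℝ) (hd : ∀ i e, 0 < d i e)
    (b : Fin (k + 1) → Fin m → ℝ) (w : Fin m → ℝ)
    (hw : ∀ e, (∑ i, d i e) * w e = ∑ i, b i e)
    (v : Fin k × Fin n → ℝ)
    (hEv : schurE k A d *ᵥ v =
      fun p : Fin k × Fin n =>
        (Aᵀ *ᵥ fun e => b p.1.castSucc e - d p.1.castSucc e * w e) p.2) :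
    ((commodityMatrix k A)ᵀ * Matrix.diagonal (fun p : Fin (k+1) × Fin m => d p.1 p.2) *
        commodityMatrix k A) *ᵥ
      (Sum.elim v (fun e => w e -
        (∑ i, d i e)⁻¹ * ∑ l : Fin k, d l.castSucc e * (A *ᵥ fun uu => v (l, uu)) e)) =
    (commodityMatrix k A)ᵀ *ᵥ (fun p : Fin (k+1) × Fin m => b p.1 p.2) := by
  have hds : ∀ e, (0:ℝ) < ∑ i, d i e := fun e =>
    Finset.sum_pos (fun i _ => hd i e) ⟨Fin.last k, Finset.mem_univ _⟩
  have hds' : ∀ e, (∑ i, d i e) ≠ 0 := fun e => (hds e).ne'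
  set av : Fin k → Fin m → ℝ := fun l e => (A *ᵥ fun uu => v (l, uu)) e with hav
  set uinr : Fin m → ℝ :=
    fun e => w e - (∑ i, d i e)⁻¹ * ∑ l : Fin k, d l.castSucc e * av l e with huinr
  set u : (Fin k × Fin n) ⊕ Fin m → ℝ := Sum.elim v uinr with hu
  rw [← Matrix.mulVec_mulVec, ← Matrix.mulVec_mulVec]
  funext q
  match q with
  | Sum.inl (j, vv) =>
    rw [cm_tmulVec_inl, cm_tmulVec_inl]
    have hz : ∀ e, (Matrix.diagonal (fun p : Fin (k+1) × Fin m => d p.1 p.2) *ᵥ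
        (commodityMatrix k A *ᵥ u)) (j.castSucc, e) =
        d j.castSucc e * (av j e + uinr e) := by
      intro e
      rw [Matrix.mulVec_diagonal, cm_mulVec_castSucc]
      rfl
    have h2 : (Aᵀ *ᵥ fun e => (Matrix.diagonal (fun p : Fin (k+1) × Fin m => d p.1 p.2) *ᵥ
        (commodityMatrix k A *ᵥ u)) (j.castSucc, e)) vv =
        ∑ e, A e vv * (d j.castSucc e * (av j e + uinr e)) := by
      simp only [Matrix.mulVec, dotProduct, Matrix.transpose_apply]
      exact Finset.sum_congr rfl fun e _ => by rw [← hz e]; rfl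
    rw [h2]
    have hEvs := congrFun hEv (j, vv)
    rw [cm_schurE_mulVec A d hds' v j vv] at hEvs
    have hrhs : (Aᵀ *ᵥ fun e => b j.castSucc e - d j.castSucc e * w e) vv =
        ∑ e, A e vv * (b j.castSucc e - d j.castSucc e * w e) := by
      simp only [Matrix.mulVec, dotProduct, Matrix.transpose_apply]
    rw [hrhs] at hEvs
    have hgoal_rhs : (Aᵀ *ᵥ fun e => b j.castSucc e) vv = ∑ e, A e vv * b j.castSucc e := by
      simp only [Matrix.mulVec, dotProduct, Matrix.transpose_apply]
    rw [hgoal_rhs]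
    calc ∑ e, A e vv * (d j.castSucc e * (av j e + uinr e))
        = (∑ e, A e vv * (d j.castSucc e *
            (av j e - (∑ i, d i e)⁻¹ * ∑ l : Fin k, d l.castSucc e * av l e))) +
          ∑ e, A e vv * (d j.castSucc e * w e) := by
          rw [← Finset.sum_add_distrib]
          refine Finset.sum_congr rfl fun e _ => ?_
          rw [huinr]
          ring
      _ = (∑ e, A e vv * (b j.castSucc e - d j.castSucc e * w e)) +
          ∑ e, A e vv * (d j.castSucc e * w e) := by rw [hEvs]
      _ = ∑ e, A e vv * b j.castSucc e := by
          rw [← Finset.sum_add_distrib]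
          exact Finset.sum_congr rfl fun e _ => by ring
  | Sum.inr e =>
    rw [cm_tmulVec_inr, cm_tmulVec_inr]
    have hzc : ∀ i : Fin (k+1), (Matrix.diagonal (fun p : Fin (k+1) × Fin m => d p.1 p.2) *ᵥ
        (commodityMatrix k A *ᵥ u)) (i, e) = d i e * (commodityMatrix k A *ᵥ u) (i, e) := by
      intro i; rw [Matrix.mulVec_diagonal]
    simp only [hzc]
    rw [Fin.sum_univ_castSucc]
    have hcs : ∀ j : Fin k, (commodityMatrix k A *ᵥ u) (j.castSucc, e) = av j e + uinr e := by
      intro j; rw [cm_mulVec_castSucc]; rfl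
    have hlast : (commodityMatrix k A *ᵥ u) (Fin.last k, e) = uinr e := by
      rw [cm_mulVec_last]; rfl
    simp only [hcs, hlast]
    have expand : ∑ j : Fin k, d j.castSucc e * (av j e + uinr e) =
        (∑ j : Fin k, d j.castSucc e * av j e) + (∑ j : Fin k, d j.castSucc e) * uinr e := by
      rw [Finset.sum_mul, ← Finset.sum_add_distrib]
      exact Finset.sum_congr rfl fun j _ => by ring
    rw [expand]
    have hsum : (∑ j : Fin k, d j.castSucc e) + d (Fin.last k) e = ∑ i, d i e := by
      rw [Fin.sum_univ_castSucc]
    have hinv : (∑ i, d i e) * uinr e =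
        (∑ i, d i e) * w e - ∑ l : Fin k, d l.castSucc e * av l e := by
      rw [huinr, mul_sub, ← mul_assoc, mul_inv_cancel₀ (hds' e), one_mul]
    linear_combination hinv + uinr e * hsum + hw e


/-- the blocks of the vector `𝒜 (𝒜ᵀ X̄ S̄⁻¹ 𝒜)⁻¹ 𝒜ᵀ S̄⁻¹ g` are
`w + A v_i − ∑_j D_j D_Σ⁻¹ A v_j` for `i = 1,…,k` and `w − ∑_j D_j D_Σ⁻¹ A v_j` for the
`(k+1)`-th block, where `w = D_Σ⁻¹ ∑_i diag(s̄_i)⁻¹ g_i` and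
`(v₁,…,v_k) = E⁻¹` applied to the stacked vector with `i`-th block
`Aᵀ (diag(s̄_i)⁻¹ g_i − D_i w)`. -/
theorem commodity_delta_s_blocks {m n k : ℕ} (hk : 1 ≤ k)
    (A : Matrix (Fin m) (Fin n) ℝ)
    (hA : ∀ y : Fin n → ℝ, A *ᵥ y = 0 → y = 0)
    (xb sb g : Fin (k + 1) → Fin m → ℝ)
    (hxb : ∀ i e, 0 < xb i e) (hsb : ∀ i e, 0 < sb i e)
    (w : Fin m → ℝ)
    (hw : w = (Matrix.diagonal fun e : Fin m => ∑ i, xb i e / sb i e)⁻¹ *ᵥ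
        ∑ i, (Matrix.diagonal (sb i))⁻¹ *ᵥ g i)
    (v : Fin k × Fin n → ℝ)
    (hv : v = (schurE k A (fun i e => xb i e / sb i e))⁻¹ *ᵥ
        (fun p : Fin k × Fin n =>
          (Aᵀ *ᵥ ((Matrix.diagonal (sb p.1.castSucc))⁻¹ *ᵥ g p.1.castSucc -
            Matrix.diagonal (fun e => xb p.1.castSucc e / sb p.1.castSucc e) *ᵥ w)) p.2))
    (res : Fin (k + 1) × Fin m → ℝ)
    (hres : res = commodityMatrix k A *ᵥ
        (((commodityMatrix k A)ᵀ *
            (Matrix.diagonal (fun p : Fin (k + 1) × Fin m => xb p.1 p.2) *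
              (Matrix.diagonal (fun p : Fin (k + 1) × Fin m => sb p.1 p.2))⁻¹) *
            commodityMatrix k A)⁻¹ *ᵥ
          ((commodityMatrix k A)ᵀ *ᵥ
            ((Matrix.diagonal (fun p : Fin (k + 1) × Fin m => sb p.1 p.2))⁻¹ *ᵥ
              fun p : Fin (k + 1) × Fin m => g p.1 p.2)))) :
    (∀ (i : Fin k) (e : Fin m),
        res (i.castSucc, e) =
          w e + (A *ᵥ fun vtx => v (i, vtx)) e -
            ∑ j : Fin k,
              ((Matrix.diagonal (fun e' => xb j.castSucc e' / sb j.castSucc e') *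
                  (Matrix.diagonal fun e' : Fin m => ∑ i', xb i' e' / sb i' e')⁻¹ * A) *ᵥ
                fun vtx => v (j, vtx)) e) ∧
    (∀ e : Fin m,
        res (Fin.last k, e) =
          w e -
            ∑ j : Fin k,
              ((Matrix.diagonal (fun e' => xb j.castSucc e' / sb j.castSucc e') *
                  (Matrix.diagonal fun e' : Fin m => ∑ i', xb i' e' / sb i' e')⁻¹ * A) *ᵥ
                fun vtx => v (j, vtx)) e) := by
  have hd : ∀ (i : Fin (k+1)) e, 0 < xb i e / sb i e := fun i e => div_pos (hxb i e) (hsb i e)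
  have hsb' : ∀ (i : Fin (k+1)) e, sb i e ≠ 0 := fun i e => (hsb i e).ne'
  have hds : ∀ e, (0:ℝ) < ∑ i, xb i e / sb i e := fun e =>
    Finset.sum_pos (fun i _ => hd i e) ⟨Fin.last k, Finset.mem_univ _⟩
  have hds' : ∀ e, (∑ i, xb i e / sb i e) ≠ 0 := fun e => (hds e).ne'
  -- entrywise formula for w
  have hwe : ∀ e, (∑ i, xb i e / sb i e) * w e = ∑ i, (sb i e)⁻¹ * g i e := by
    intro e
    rw [hw, cm_diag_inv _ hds', Matrix.mulVec_diagonal, ← mul_assoc,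
      mul_inv_cancel₀ (hds' e), one_mul, Finset.sum_apply]
    exact Finset.sum_congr rfl fun i _ => by
      rw [cm_diag_inv _ (hsb' i), Matrix.mulVec_diagonal]
  -- E v = right-hand side
  have hEv : schurE k A (fun i e => xb i e / sb i e) *ᵥ v =
      fun p : Fin k × Fin n =>
        (Aᵀ *ᵥ fun e => (sb p.1.castSucc e)⁻¹ * g p.1.castSucc e -
          (xb p.1.castSucc e / sb p.1.castSucc e) * w e) p.2 := by
    rw [hv, Matrix.mulVec_mulVec,
      Matrix.mul_nonsing_inv _ (cm_E_isUnit A hA (fun i e => xb i e / sb i e) hd),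
      Matrix.one_mulVec]
    funext p
    congr 1
    funext e
    rw [Pi.sub_apply, cm_diag_inv _ (hsb' p.1.castSucc), Matrix.mulVec_diagonal,
      Matrix.mulVec_diagonal]
  have hMu := cm_main A (fun i e => xb i e / sb i e) hd
    (fun i e => (sb i e)⁻¹ * g i e) w hwe v hEv
  -- identify the diagonal matrices in hres
  have hDD : Matrix.diagonal (fun p : Fin (k + 1) × Fin m => xb p.1 p.2) *
      (Matrix.diagonal (fun p : Fin (k + 1) × Fin m => sb p.1 p.2))⁻¹ =
      Matrix.diagonal (fun p : Fin (k+1) × Fin m => xb p.1 p.2 / sb p.1 p.2) := by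
    rw [cm_diag_inv (fun p : Fin (k+1) × Fin m => sb p.1 p.2) (fun p => hsb' p.1 p.2), Matrix.diagonal_mul_diagonal]
    congr 1
  have hbv : (Matrix.diagonal (fun p : Fin (k + 1) × Fin m => sb p.1 p.2))⁻¹ *ᵥ
      (fun p : Fin (k + 1) × Fin m => g p.1 p.2) =
      fun p : Fin (k+1) × Fin m => (sb p.1 p.2)⁻¹ * g p.1 p.2 := by
    funext p
    rw [cm_diag_inv (fun p : Fin (k+1) × Fin m => sb p.1 p.2) (fun p => hsb' p.1 p.2), Matrix.mulVec_diagonal]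
  rw [hDD, hbv] at hres
  have hu : (((commodityMatrix k A)ᵀ *
      Matrix.diagonal (fun p : Fin (k+1) × Fin m => xb p.1 p.2 / sb p.1 p.2) *
      commodityMatrix k A)⁻¹ *ᵥ
      ((commodityMatrix k A)ᵀ *ᵥ fun p : Fin (k+1) × Fin m => (sb p.1 p.2)⁻¹ * g p.1 p.2)) =
      Sum.elim v (fun e => w e -
        (∑ i, xb i e / sb i e)⁻¹ *
          ∑ l : Fin k, (xb l.castSucc e / sb l.castSucc e) * (A *ᵥ fun uu => v (l, uu)) e) := by
    rw [← hMu, Matrix.mulVec_mulVec,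
      Matrix.nonsing_inv_mul _ (cm_M_isUnit A hA _ (fun p => hd p.1 p.2)),
      Matrix.one_mulVec]
  rw [hu] at hres
  have hterm : ∀ (j : Fin k) (e : Fin m),
      ((Matrix.diagonal (fun e' => xb j.castSucc e' / sb j.castSucc e') *
          (Matrix.diagonal fun e' : Fin m => ∑ i', xb i' e' / sb i' e')⁻¹ * A) *ᵥ
        fun vtx => v (j, vtx)) e =
      (xb j.castSucc e / sb j.castSucc e) * (∑ i', xb i' e / sb i' e)⁻¹ *
        (A *ᵥ fun vtx => v (j, vtx)) e := by
    intro j e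
    rw [cm_DDinvA_mulVec _ _ hds']
  constructor
  · intro i e
    rw [hres, cm_mulVec_castSucc]
    simp only [Sum.elim_inl, Sum.elim_inr]
    rw [Finset.sum_congr rfl fun j _ => hterm j e]
    rw [Finset.mul_sum]
    rw [Finset.sum_congr rfl (fun j _ => by ring :
      ∀ j ∈ Finset.univ, (∑ i', xb i' e / sb i' e)⁻¹ *
        ((xb j.castSucc e / sb j.castSucc e) * (A *ᵥ fun uu => v (j, uu)) e) =
        (xb j.castSucc e / sb j.castSucc e) * (∑ i', xb i' e / sb i' e)⁻¹ *
          (A *ᵥ fun uu => v (j, uu)) e)]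
    ring
  · intro e
    rw [hres, cm_mulVec_last]
    simp only [Sum.elim_inr]
    rw [Finset.sum_congr rfl fun j _ => hterm j e]
    rw [Finset.mul_sum]
    rw [Finset.sum_congr rfl (fun j _ => by ring :
      ∀ j ∈ Finset.univ, (∑ i', xb i' e / sb i' e)⁻¹ *
        ((xb j.castSucc e / sb j.castSucc e) * (A *ᵥ fun uu => v (j, uu)) e) =
        (xb j.castSucc e / sb j.castSucc e) * (∑ i', xb i' e / sb i' e)⁻¹ *
          (A *ᵥ fun uu => v (j, uu)) e)]
end

section
/- Let M ∈ ℝ^{N×p} be a real matrix, b ∈ ℝ^p, c ∈ ℝ^N, and t' ≤ t positive reals. Suppose (x, y, s) and (x', y', s') satisfy: x, s, x', s' ∈ ℝ^N are entrywise positive, Mᵀx = b, My + s = c, Mᵀx' = b, My' + s' = c, and entrywise x_i s_i ≈_{1/10} t and x'_i s'_i ≈_{1/10} t'. Then Σ_{i=1}^N (x'_i/x_i) + Σ_{i=1}^N (s'_i/s_i) ≤ 3N. -/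
open Matrix

/-- `a ≈_ε b` means `exp(−ε)·a ≤ b ≤ exp(ε)·a`. -/
def approx (ε a b : ℝ) : Prop := Real.exp (-ε) * a ≤ b ∧ b ≤ Real.exp ε * a

lemma exp_fifth_sq_le : Real.exp (1/10) ^ 2 ≤ 3/2 := by
  have h10 : Real.exp (1/10) ^ 10 = Real.exp 1 := by
    rw [← Real.exp_nat_mul]; norm_num
  have he : Real.exp 1 < 2.7182818286 := Real.exp_one_lt_d9
  by_contra h
  push_neg at h
  have h2 : ((3:ℝ)/2) ^ 5 < (Real.exp (1/10) ^ 2) ^ 5 :=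
    pow_lt_pow_left₀ h (by norm_num) (by norm_num)
  have h3 : (Real.exp (1/10) ^ 2) ^ 5 = Real.exp (1/10) ^ 10 := by ring
  rw [h3, h10] at h2
  norm_num at h2
  linarith

/-- for feasible primal-dual pairs `(x, y, s)` and `(x', y', s')` of the LP
`min cᵀx s.t. Mᵀx = b, x ≥ 0`, with `x_i s_i ≈_{1/10} t`, `x'_i s'_i ≈_{1/10} t'` and
`t' ≤ t`, one has `∑ x'_i/x_i + ∑ s'_i/s_i ≤ 3N`. -/
theorem primal_dual_ratio_bound {N p : ℕ}
    (M : Matrix (Fin N) (Fin p) ℝ) (b : Fin p → ℝ) (c : Fin N → ℝ)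
    (t t' : ℝ) (ht' : 0 < t') (ht : 0 < t) (htt : t' ≤ t)
    (x x' s s' : Fin N → ℝ) (y y' : Fin p → ℝ)
    (hx : ∀ i, 0 < x i) (hs : ∀ i, 0 < s i)
    (hx' : ∀ i, 0 < x' i) (hs' : ∀ i, 0 < s' i)
    (hprim : Mᵀ *ᵥ x = b) (hdual : M *ᵥ y + s = c)
    (hprim' : Mᵀ *ᵥ x' = b) (hdual' : M *ᵥ y' + s' = c)
    (hxs : ∀ i, approx (1 / 10) (x i * s i) t)
    (hxs' : ∀ i, approx (1 / 10) (x' i * s' i) t') :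
    (∑ i, x' i / x i) + (∑ i, s' i / s i) ≤ 3 * N := by
  set K := Real.exp (1/10) with hKdef
  have hKpos : 0 < K := Real.exp_pos _
  have hK1 : 1 ≤ K := by
    rw [hKdef]; nlinarith [Real.add_one_le_exp (1/10 : ℝ)]
  -- orthogonality
  have hMyy : M *ᵥ (y' - y) = s - s' := by
    have h1 : M *ᵥ y = c - s := eq_sub_of_add_eq hdual
    have h2 : M *ᵥ y' = c - s' := eq_sub_of_add_eq hdual'
    rw [Matrix.mulVec_sub, h1, h2]
    funext i; simp
  have hxx : Mᵀ *ᵥ (x - x') = 0 := by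
    rw [Matrix.mulVec_sub, hprim, hprim']; simp
  have horth : ((x - x') ⬝ᵥ (s - s')) = 0 := by
    rw [← hMyy, Matrix.dotProduct_mulVec, ← Matrix.mulVec_transpose, hxx, zero_dotProduct]
  have horth' : ∑ i, (x i - x' i) * (s i - s' i) = 0 := by
    simpa [dotProduct] using horth
  have hkey : ∑ i, (x i * s' i + x' i * s i) ≤ ∑ i, (x i * s i + x' i * s' i) := by
    have expand : ∑ i, (x i - x' i) * (s i - s' i)
        = ∑ i, (x i * s i + x' i * s' i) - ∑ i, (x i * s' i + x' i * s i) := by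
      rw [← Finset.sum_sub_distrib]
      exact Finset.sum_congr rfl fun i _ => by ring
    rw [expand] at horth'
    linarith
  -- bounds from approximate centrality
  have hlow : ∀ i, t / K ≤ x i * s i := fun i => by
    have h := (hxs i).2
    rw [div_le_iff₀ hKpos]
    nlinarith
  have hup : ∀ i, x i * s i ≤ K * t := fun i => by
    have h := (hxs i).1
    have hKinv : Real.exp (-(1/10)) = K⁻¹ := by rw [hKdef, Real.exp_neg]
    rw [show ((1:ℝ)/10) = (1/10 : ℝ) by norm_num] at h
    rw [hKinv] at h
    have := (inv_mul_le_iff₀ hKpos).mp h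
    linarith
  have hup' : ∀ i, x' i * s' i ≤ K * t' := fun i => by
    have h := (hxs' i).1
    have hKinv : Real.exp (-(1/10)) = K⁻¹ := by rw [hKdef, Real.exp_neg]
    rw [hKinv] at h
    have := (inv_mul_le_iff₀ hKpos).mp h
    linarith
  -- per-index bound
  have hper : ∀ i : Fin N, x' i / x i + s' i / s i ≤ (x i * s' i + x' i * s i) * (K / t) := by
    intro i
    have hxi := hx i; have hsi := hs i; have hxi' := hx' i; have hsi' := hs' i
    have heq : x' i / x i + s' i / s i = (x i * s' i + x' i * s i) / (x i * s i) := by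
      field_simp; ring
    rw [heq]
    have hnum : 0 ≤ x i * s' i + x' i * s i := by positivity
    have hden : t / K ≤ x i * s i := hlow i
    have htK : 0 < t / K := by positivity
    calc (x i * s' i + x' i * s i) / (x i * s i)
        ≤ (x i * s' i + x' i * s i) / (t / K) :=
          div_le_div_of_nonneg_left hnum htK hden
      _ = (x i * s' i + x' i * s i) * (K / t) := by
          field_simp
  -- sum it all up
  have hsum1 : (∑ i, x' i / x i) + (∑ i, s' i / s i)
      ≤ (∑ i, (x i * s' i + x' i * s i)) * (K / t) := by
    rw [← Finset.sum_add_distrib, Finset.sum_mul]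
    exact Finset.sum_le_sum fun i _ => hper i
  have hsum2 : ∑ i, (x i * s i + x' i * s' i) ≤ (N : ℝ) * (K * t + K * t') := by
    calc ∑ i, (x i * s i + x' i * s' i) ≤ ∑ _i : Fin N, (K * t + K * t') :=
          Finset.sum_le_sum fun i _ => add_le_add (hup i) (hup' i)
      _ = (N : ℝ) * (K * t + K * t') := by rw [Finset.sum_const, Finset.card_fin]; push_cast; ring
  have hKt : 0 < K / t := by positivity
  have hsum3 : (∑ i, (x i * s' i + x' i * s i)) * (K / t) ≤ (N : ℝ) * (K * t + K * t') * (K / t) :=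
    mul_le_mul_of_nonneg_right (le_trans hkey hsum2) (le_of_lt hKt)
  have hfinal : (N : ℝ) * (K * t + K * t') * (K / t) ≤ 3 * N := by
    have hK2 : K ^ 2 ≤ 3/2 := exp_fifth_sq_le
    have h1 : (N : ℝ) * (K * t + K * t') * (K / t) ≤ (N : ℝ) * (2 * K * t) * (K / t) := by
      have : K * t + K * t' ≤ 2 * K * t := by nlinarith
      have hN : (0:ℝ) ≤ N := Nat.cast_nonneg N
      exact mul_le_mul_of_nonneg_right (mul_le_mul_of_nonneg_left this hN) hKt.le
    have h2 : (N : ℝ) * (2 * K * t) * (K / t) = 2 * K ^ 2 * N := by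
      field_simp
    have hN : (0:ℝ) ≤ N := Nat.cast_nonneg N
    nlinarith
  linarith
end

section
/- Let M ∈ ℝ^{N×p} be a real matrix, b ∈ ℝ^p, c ∈ ℝ^N, u ∈ ℝ^N entrywise positive, and 0 < t ≤ t_init. Suppose (x_init, y_init, s_init) and (x, y, s) satisfy: x_init, s_init, x, s ∈ ℝ^N are entrywise positive, Mᵀx_init = b, My_init + s_init = c, Mᵀx = b, My + s = c, entrywise (x_init)_i (s_init)_i ≈_{1/16} t_init and x_i s_i ≈_{1/16} t, and x ≤ u entrywise. Then for every index i: t/(10 u_i) ≤ s_i ≤ 3N·(s_init)_i, and t/(4N·(s_init)_i) ≤ x_i ≤ u_i. -/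
open Matrix

/-- bounds on the primal iterate `x` and dual slack `s` throughout the IPM.
For feasible pairs `(x_init, y_init, s_init)` with `(x_init)_i (s_init)_i ≈_{1/16} t_init`
and `(x, y, s)` with `x_i s_i ≈_{1/16} t`, `0 < t ≤ t_init` and `x ≤ u` entrywise, every
index `i` satisfies `t/(10 u_i) ≤ s_i ≤ 3N (s_init)_i` and `t/(4N (s_init)_i) ≤ x_i ≤ u_i`. -/
theorem ipm_primal_dual_entry_bounds {N p : ℕ}
    (M : Matrix (Fin N) (Fin p) ℝ) (b : Fin p → ℝ) (c : Fin N → ℝ)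
    (u : Fin N → ℝ) (hu : ∀ i, 0 < u i)
    (t tinit : ℝ) (ht : 0 < t) (httinit : t ≤ tinit)
    (xinit x sinit s : Fin N → ℝ) (yinit y : Fin p → ℝ)
    (hxinit : ∀ i, 0 < xinit i) (hsinit : ∀ i, 0 < sinit i)
    (hx : ∀ i, 0 < x i) (hs : ∀ i, 0 < s i)
    (hpriminit : Mᵀ *ᵥ xinit = b) (hdualinit : M *ᵥ yinit + sinit = c)
    (hprim : Mᵀ *ᵥ x = b) (hdual : M *ᵥ y + s = c)
    (hxsinit : ∀ i, approx (1 / 16) (xinit i * sinit i) tinit)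
    (hxs : ∀ i, approx (1 / 16) (x i * s i) t)
    (hxu : ∀ i, x i ≤ u i) :
    ∀ i, t / (10 * u i) ≤ s i ∧ s i ≤ 3 * N * sinit i ∧
      t / (4 * N * sinit i) ≤ x i ∧ x i ≤ u i := by
  set E := Real.exp (1/16) with hEdef
  have hEpos : 0 < E := Real.exp_pos _
  have hEinv : Real.exp (-(1/16)) * E = 1 := by
    rw [hEdef, ← Real.exp_add]; norm_num
  have hE1 : 1 ≤ E := Real.one_le_exp (by norm_num)
  have hElow : (15:ℝ)/16 ≤ Real.exp (-(1/16)) := by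
    have := Real.add_one_le_exp (-(1/16 : ℝ)); linarith
  have hE : E ≤ 16/15 := by
    nlinarith [hElow, hEinv]
  have conv : ∀ a b : ℝ, approx (1/16) a b → a ≤ E * b ∧ b ≤ E * a := by
    rintro a b ⟨h1, h2⟩
    refine ⟨?_, h2⟩
    have h3 := mul_le_mul_of_nonneg_left h1 hEpos.le
    rw [← mul_assoc, mul_comm E (Real.exp (-(1/16))), hEinv, one_mul] at h3
    exact h3
  -- orthogonality
  have hsd : M *ᵥ (yinit - y) = s - sinit := by
    have h1 : M *ᵥ yinit = c - sinit := eq_sub_of_add_eq hdualinit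
    have h2 : M *ᵥ y = c - s := eq_sub_of_add_eq hdual
    rw [Matrix.mulVec_sub, h1, h2]
    abel
  have hxd : Mᵀ *ᵥ (x - xinit) = 0 := by
    rw [Matrix.mulVec_sub, hprim, hpriminit, sub_self]
  have horth : ∑ i, (x i - xinit i) * (s i - sinit i) = 0 := by
    have : (x - xinit) ⬝ᵥ (s - sinit) = 0 := by
      rw [← hsd, Matrix.dotProduct_mulVec, ← Matrix.mulVec_transpose, hxd]
      simp
    simpa [dotProduct] using this
  have hkey : ∑ i, (x i * sinit i + xinit i * s i) = ∑ i, (x i * s i + xinit i * sinit i) := by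
    have h0 : ∑ i, ((x i * s i + xinit i * sinit i) - (x i * sinit i + xinit i * s i)) = 0 := by
      rw [← horth]; apply Finset.sum_congr rfl; intros; ring
    rw [Finset.sum_sub_distrib] at h0; linarith
  have hNnn : (0:ℝ) ≤ (N:ℝ) := Nat.cast_nonneg N
  have hsum : ∑ j, (x j * sinit j + xinit j * s j) ≤ 2 * E * N * tinit := by
    rw [hkey]
    have hENt : E * (N:ℝ) * t ≤ E * (N:ℝ) * tinit :=
      mul_le_mul_of_nonneg_left httinit (mul_nonneg hEpos.le hNnn)
    calc ∑ j, (x j * s j + xinit j * sinit j) ≤ ∑ _j : Fin N, (E * t + E * tinit) := by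
          apply Finset.sum_le_sum
          intro j _
          have h1 := (conv _ _ (hxs j)).1
          have h2 := (conv _ _ (hxsinit j)).1
          linarith
      _ = N * (E * t + E * tinit) := by
          rw [Finset.sum_const, Finset.card_univ, Fintype.card_fin, nsmul_eq_mul]
      _ ≤ 2 * E * N * tinit := by nlinarith [hENt]
  intro i
  have hN1 : (1:ℝ) ≤ N := by exact_mod_cast Nat.one_le_iff_ne_zero.mpr (Nat.pos_iff_ne_zero.mp i.pos)
  have hterm : x i * sinit i + xinit i * s i ≤ 2 * E * N * tinit := by
    refine le_trans ?_ hsum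
    apply Finset.single_le_sum (f := fun j => x j * sinit j + xinit j * s j) ?_ (Finset.mem_univ i)
    intro j _
    exact add_nonneg (mul_pos (hx j) (hsinit j)).le (mul_pos (hxinit j) (hs j)).le
  have hA : xinit i * s i ≤ 2 * E * N * tinit := by
    nlinarith [mul_pos (hx i) (hsinit i)]
  have hB : tinit ≤ E * (xinit i * sinit i) := (conv _ _ (hxsinit i)).2
  have ht2 : t ≤ E * (x i * s i) := (conv _ _ (hxs i)).2
  have h2E : 2 * E * E ≤ 3 := by nlinarith
  -- s i ≤ 3 N sinit i
  have hsub : s i ≤ 3 * N * sinit i := by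
    have hNX : (0:ℝ) ≤ (N:ℝ) * (xinit i * sinit i) :=
      mul_nonneg hNnn (mul_pos (hxinit i) (hsinit i)).le
    have hB2 : 2 * E * N * tinit ≤ 2 * E * N * (E * (xinit i * sinit i)) :=
      mul_le_mul_of_nonneg_left hB
        (mul_nonneg (mul_nonneg (by norm_num) hEpos.le) hNnn)
    have hmul : xinit i * s i ≤ xinit i * (3 * N * sinit i) := by
      nlinarith [hA, hB2, h2E, hNX]
    exact le_of_mul_le_mul_left hmul (hxinit i)
  refine ⟨?_, hsub, ?_, hxu i⟩
  · rw [div_le_iff₀ (mul_pos (by norm_num : (0:ℝ) < 10) (hu i))]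
    have hus : (0:ℝ) ≤ u i * s i := mul_nonneg (hu i).le (hs i).le
    have h1 : x i * s i ≤ u i * s i := mul_le_mul_of_nonneg_right (hxu i) (hs i).le
    have h2 : E * (x i * s i) ≤ E * (u i * s i) := mul_le_mul_of_nonneg_left h1 hEpos.le
    have h3 : E * (u i * s i) ≤ (16/15) * (u i * s i) := mul_le_mul_of_nonneg_right hE hus
    linarith [ht2, h2, h3, hus]
  · have hNpos : (0:ℝ) < N := lt_of_lt_of_le one_pos hN1
    have hNs : (0:ℝ) < 4 * (N:ℝ) * sinit i :=
      mul_pos (mul_pos (by norm_num) hNpos) (hsinit i)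
    rw [div_le_iff₀ hNs]
    have hxN3 : (0:ℝ) ≤ x i * (3 * N * sinit i) :=
      mul_nonneg (hx i).le (mul_nonneg (mul_nonneg (by norm_num) hNnn) (hsinit i).le)
    have hx3 : x i * s i ≤ x i * (3 * N * sinit i) :=
      mul_le_mul_of_nonneg_left hsub (hx i).le
    have hx3' : E * (x i * s i) ≤ E * (x i * (3 * N * sinit i)) :=
      mul_le_mul_of_nonneg_left hx3 hEpos.le
    have hstep : E * (x i * (3 * N * sinit i)) ≤ (16/15) * (x i * (3 * N * sinit i)) :=
      mul_le_mul_of_nonneg_right hE hxN3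
    linarith [ht2, hx3', hstep, hxN3]
end

section
/- Let A ∈ ℝ^{m×n}, let K ≥ 1, let v₁,…,v_K ∈ ℝ^n, w ∈ ℝ^m, and let d₁,…,d_K ∈ ℝ^m be entrywise positive vectors with d_Σ = Σ_{i=1}^K d_i (entrywise). Writing D_i = diag(d_i) and D_Σ = diag(d_Σ), it holds that Σ_{i=1}^K Σ_{j=1}^K ‖D_i^{1/2} D_j D_Σ⁻¹ A (v_i − v_j)‖₂² ≤ 4 · Σ_{i=1}^K ‖D_i^{1/2} (w + Σ_{j=1}^K D_j D_Σ⁻¹ A (v_i − v_j))‖₂². -/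
open Matrix Finset

lemma core_ineq {K : ℕ} (hK : 1 ≤ K) (d : Fin K → ℝ) (hd : ∀ i, 0 < d i)
    (u : Fin K → ℝ) (w : ℝ) :
    ∑ i, ∑ j, d i * (d j / (∑ l, d l)) ^ 2 * (u i - u j) ^ 2 ≤
      4 * ∑ i, d i * (w + ∑ j, (d j / (∑ l, d l)) * (u i - u j)) ^ 2 := by
  have hne : Nonempty (Fin K) := ⟨⟨0, hK⟩⟩
  set S := ∑ l, d l with hS
  have hSpos : 0 < S := Finset.sum_pos (fun i _ => hd i) univ_nonempty
  set p : Fin K → ℝ := fun i => d i / S with hp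
  have hp1 : ∑ j, p j = 1 := by
    simp only [hp]
    rw [← Finset.sum_div, ← hS, div_self hSpos.ne']
  have hple : ∀ j, p j ≤ 1 := fun j => by
    rw [hp, div_le_one hSpos]
    exact Finset.single_le_sum (fun i _ => (hd i).le) (mem_univ j)
  have hpnn : ∀ j, 0 ≤ p j := fun j => div_nonneg (hd j).le hSpos.le
  set s := ∑ j, p j * u j with hs
  set q : Fin K → ℝ := fun i => u i - s with hq
  have hinner : ∀ i, ∑ j, p j * (u i - u j) = q i := by
    intro i
    simp only [mul_sub]
    rw [Finset.sum_sub_distrib, ← Finset.sum_mul, hp1, one_mul, ← hs]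
  have hdq : ∑ i, d i * q i = 0 := by
    have hSs : S * s = ∑ i, d i * u i := by
      rw [hs, Finset.mul_sum]
      refine Finset.sum_congr rfl fun j _ => ?_
      rw [hp]; field_simp
    simp only [hq, mul_sub]
    rw [Finset.sum_sub_distrib, ← Finset.sum_mul, ← hS]
    linarith [hSs]
  set T := ∑ i, d i * q i ^ 2 with hT
  have hTnn : 0 ≤ T := Finset.sum_nonneg fun i _ =>
    mul_nonneg (hd i).le (sq_nonneg _)
  -- RHS = 4*T + 4*S*w^2
  have hRHS : ∑ i, d i * (w + ∑ j, p j * (u i - u j)) ^ 2 = T + 2 * w * (∑ i, d i * q i) + S * w ^ 2 := by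
    have : ∀ i, d i * (w + ∑ j, p j * (u i - u j)) ^ 2
        = d i * q i ^ 2 + 2 * w * (d i * q i) + d i * w ^ 2 := by
      intro i; rw [hinner i]; ring
    rw [Finset.sum_congr rfl fun i _ => this i]
    rw [Finset.sum_add_distrib, Finset.sum_add_distrib, ← Finset.mul_sum, ← Finset.sum_mul, ← hS, ← hT]
  set P := ∑ j, p j ^ 2 with hP
  set Q := ∑ j, p j ^ 2 * q j ^ 2 with hQ
  have hLHS : ∑ i, ∑ j, d i * p j ^ 2 * (u i - u j) ^ 2 ≤ 2 * P * T + 2 * S * Q := by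
    have step : ∀ i j, d i * p j ^ 2 * (u i - u j) ^ 2 ≤
        2 * (p j ^ 2 * (d i * q i ^ 2)) + 2 * (d i * (p j ^ 2 * q j ^ 2)) := by
      intro i j
      have h1 : u i - u j = q i - q j := by simp [hq]
      rw [h1]
      nlinarith [mul_nonneg (hd i).le (sq_nonneg (p j)), sq_nonneg (q i + q j),
        mul_nonneg (mul_nonneg (hd i).le (sq_nonneg (p j))) (sq_nonneg (q i + q j))]
    calc ∑ i, ∑ j, d i * p j ^ 2 * (u i - u j) ^ 2
        ≤ ∑ i, ∑ j, (2 * (p j ^ 2 * (d i * q i ^ 2)) + 2 * (d i * (p j ^ 2 * q j ^ 2))) :=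
          Finset.sum_le_sum fun i _ => Finset.sum_le_sum fun j _ => step i j
      _ = 2 * P * T + 2 * S * Q := by
          simp only [Finset.sum_add_distrib]
          rw [← Finset.sum_add_distrib]
          have e1 : ∀ i : Fin K, ∑ j, 2 * (p j ^ 2 * (d i * q i ^ 2)) = 2 * P * (d i * q i ^ 2) := by
            intro i; rw [← Finset.mul_sum, ← Finset.sum_mul, ← hP]; ring
          have e2 : ∀ i : Fin K, ∑ j, 2 * (d i * (p j ^ 2 * q j ^ 2)) = 2 * Q * d i := by
            intro i; rw [← Finset.mul_sum, ← Finset.mul_sum, ← hQ]; ring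
          rw [Finset.sum_congr rfl fun i _ => by rw [e1 i, e2 i]]
          rw [Finset.sum_add_distrib, ← Finset.mul_sum, ← Finset.mul_sum, ← hT, ← hS]
          ring
  have hP1 : P ≤ 1 := by
    rw [hP, ← hp1]
    exact Finset.sum_le_sum fun j _ => by
      nlinarith [hpnn j, hple j]
  have hSQ : S * Q ≤ T := by
    rw [hQ, hT, Finset.mul_sum]
    refine Finset.sum_le_sum fun j _ => ?_
    have hdj : d j = S * p j := by rw [hp]; field_simp
    have : S * (p j ^ 2 * q j ^ 2) = (d j * q j ^ 2) * p j := by rw [hdj]; ring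
    rw [this]
    nlinarith [mul_nonneg (hd j).le (sq_nonneg (q j)), hple j, hpnn j]
  calc ∑ i, ∑ j, d i * p j ^ 2 * (u i - u j) ^ 2
      ≤ 2 * P * T + 2 * S * Q := hLHS
    _ ≤ 4 * T := by nlinarith
    _ ≤ 4 * ∑ i, d i * (w + ∑ j, p j * (u i - u j)) ^ 2 := by
        rw [hRHS, hdq]; nlinarith [sq_nonneg w, hSpos.le, mul_nonneg hSpos.le (sq_nonneg w)]


/-- the multi-commodity norm bound. For `A ∈ ℝ^{m×n}`, vectors
`v₁,…,v_K ∈ ℝ^n`, `w ∈ ℝ^m`, entrywise positive `d₁,…,d_K ∈ ℝ^m` with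
`d_Σ = ∑ d_i` (entrywise):
`∑_{i,j} ‖D_i^{1/2} D_j D_Σ⁻¹ A (v_i − v_j)‖₂²
  ≤ 4 ∑_i ‖D_i^{1/2} (w + ∑_j D_j D_Σ⁻¹ A (v_i − v_j))‖₂²`,
stated coordinatewise as sums of squares. -/
theorem commodity_norm_bound {m n K : ℕ} (hK : 1 ≤ K)
    (A : Matrix (Fin m) (Fin n) ℝ)
    (v : Fin K → Fin n → ℝ) (w : Fin m → ℝ)
    (d : Fin K → Fin m → ℝ) (hd : ∀ i e, 0 < d i e) :
    ∑ i, ∑ j, ∑ e,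
        d i e * (d j e / (∑ l, d l e)) ^ 2 * ((A *ᵥ (v i - v j)) e) ^ 2 ≤
      4 * ∑ i, ∑ e,
        d i e * (w e + ∑ j, (d j e / (∑ l, d l e)) * (A *ᵥ (v i - v j)) e) ^ 2 := by
  have hmv : ∀ (i j : Fin K) (e : Fin m),
      (A *ᵥ (v i - v j)) e = (A *ᵥ v i) e - (A *ᵥ v j) e := by
    intro i j e
    rw [Matrix.mulVec_sub]
    rfl
  calc ∑ i, ∑ j, ∑ e, d i e * (d j e / (∑ l, d l e)) ^ 2 * ((A *ᵥ (v i - v j)) e) ^ 2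
      = ∑ e, ∑ i, ∑ j, d i e * (d j e / (∑ l, d l e)) ^ 2 * ((A *ᵥ v i) e - (A *ᵥ v j) e) ^ 2 := by
        simp_rw [hmv]
        exact (Finset.sum_congr rfl fun i _ => Finset.sum_comm).trans Finset.sum_comm
    _ ≤ ∑ e, 4 * ∑ i, d i e * (w e + ∑ j, (d j e / (∑ l, d l e)) * ((A *ᵥ v i) e - (A *ᵥ v j) e)) ^ 2 := by
        refine Finset.sum_le_sum fun e _ => ?_
        exact core_ineq hK (fun i => d i e) (fun i => hd i e) (fun i => (A *ᵥ v i) e) (w e)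
    _ = 4 * ∑ i, ∑ e, d i e * (w e + ∑ j, (d j e / (∑ l, d l e)) * (A *ᵥ (v i - v j)) e) ^ 2 := by
        simp_rw [hmv]
        rw [← Finset.mul_sum]
        exact congrArg _ Finset.sum_comm
end

section
/- Let A ∈ ℝ^{m×n}, let k ≥ 1, let v₁,…,v_k ∈ ℝ^n and set v_{k+1} = 0 ∈ ℝ^n. Let w ∈ ℝ^m, let x̄₁,…,x̄_{k+1}, s̄₁,…,s̄_{k+1} ∈ ℝ^m be entrywise positive, set d_i = x̄_i/s̄_i (entrywise) for i = 1,…,k+1 and d_Σ = Σ_{i=1}^{k+1} d_i, and let μ > 0 satisfy x̄_i(e)·s̄_i(e) ≈_{1/5} μ for all i and all coordinates e. Suppose that for some ε ≥ 0, Σ_{i=1}^{k+1} ‖ (1/s̄_i) · (w + Σ_{j=1}^{k+1} (d_j/d_Σ) · A(v_i − v_j)) ‖₂² ≤ ε². Then Σ_{i=1}^{k+1} Σ_{j=1}^{k+1} ‖ (1/s̄_i) · (d_j/d_Σ) · A(v_i − v_j) ‖₂² ≤ 6ε², and Σ_{i=1}^{k+1} ‖ w/s̄_i ‖₂² ≤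 2ε². -/
open Matrix Finset

private lemma core_ipm {ι : Type*} [Fintype ι] [Nonempty ι]
    (c d : ι → ℝ) (hc : ∀ i, 0 < c i) (hd : ∀ i, 0 < d i)
    (μ q : ℝ) (hμ : 0 < μ) (hq1 : 1 ≤ q)
    (hlo : ∀ i, μ * c i ≤ q * d i) (hhi : ∀ i, d i ≤ q * (μ * c i))
    (p : ℝ) (t : ι → ℝ) :
    (∑ i, ∑ j, c i * (d j / ∑ l, d l) ^ 2 * (t i - t j) ^ 2
       ≤ (1 + q) ^ 2 * ∑ i, c i * (t i - (∑ j, d j * t j) / ∑ l, d l) ^ 2) ∧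
    ((3 - 2 * q) * (∑ i, c i * p ^ 2)
        + ((3 - q) / 2) * (∑ i, c i * (t i - (∑ j, d j * t j) / ∑ l, d l) ^ 2)
       ≤ ∑ i, c i * (p + (t i - (∑ j, d j * t j) / ∑ l, d l)) ^ 2) := by
  have hq0 : 0 < q := lt_of_lt_of_le one_pos hq1
  set D := ∑ l, d l with hD
  set T := ∑ j, d j * t j with hT
  have hD0 : 0 < D := Finset.sum_pos (fun i _ => hd i) Finset.univ_nonempty
  set z : ι → ℝ := fun i => t i - T / D with hz
  have hfold : ∀ i, t i - T / D = z i := fun _ => rfl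
  simp only [hfold]
  set S := ∑ i, c i * z i ^ 2 with hS
  clear_value D T z S
  have hS0 : 0 ≤ S := by
    rw [hS]; exact Finset.sum_nonneg fun i _ => mul_nonneg (hc i).le (sq_nonneg _)
  have hdD : ∀ j, d j ≤ D := fun j =>
    hD ▸ Finset.single_le_sum (fun i _ => (hd i).le) (Finset.mem_univ j)
  constructor
  · -- part A
    have hA : ∀ i j, c i * (d j / D) ^ 2 * (t i - t j) ^ 2
        ≤ (1 + q) * (c i * (d j / D) ^ 2 * z i ^ 2)
          + (1 + 1 / q) * (c i * (d j / D) ^ 2 * z j ^ 2) := by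
      intro i j
      have h1 : t i - t j = z i - z j := by simp only [hz]; ring
      rw [h1]
      have hb : 0 ≤ c i * (d j / D) ^ 2 := mul_nonneg (hc i).le (sq_nonneg _)
      have hqz : q * (1 / q) * z j ^ 2 = z j ^ 2 := by field_simp
      have key : (z i - z j) ^ 2 ≤ (1 + q) * z i ^ 2 + (1 + 1 / q) * z j ^ 2 := by
        have h3 : 0 ≤ q * ((1 + q) * z i ^ 2 + (1 + 1 / q) * z j ^ 2 - (z i - z j) ^ 2) := by
          nlinarith [sq_nonneg (q * z i + z j), hqz]
        nlinarith [h3, hq0]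
      nlinarith [mul_le_mul_of_nonneg_left key hb]
    have hbeta : ∑ j, (d j / D) ^ 2 ≤ 1 := by
      have h1 : ∑ j, d j / D = 1 := by
        rw [← Finset.sum_div, ← hD, div_self hD0.ne']
      calc ∑ j, (d j / D) ^ 2 ≤ ∑ j, d j / D := by
            refine Finset.sum_le_sum fun j _ => ?_
            have h0 : 0 ≤ d j / D := (div_pos (hd j) hD0).le
            have h2 : d j / D ≤ 1 := (div_le_one hD0).mpr (hdD j)
            nlinarith
        _ = 1 := h1
    have hG0 : 0 ≤ ∑ j, (d j / D) ^ 2 * z j ^ 2 :=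
      Finset.sum_nonneg fun j _ => by positivity
    have hG : ∑ j, (d j / D) ^ 2 * z j ^ 2 ≤ q * μ / D * S := by
      rw [hS, Finset.mul_sum]
      refine Finset.sum_le_sum fun j _ => ?_
      have key : d j ^ 2 * z j ^ 2 * D ≤ q * μ * (c j * z j ^ 2) * D ^ 2 := by
        have h1 : d j * d j ≤ q * (μ * c j) * D :=
          mul_le_mul (hhi j) (hdD j) (hd j).le (le_trans (hd j).le (hhi j))
        nlinarith [mul_le_mul_of_nonneg_right h1 (mul_nonneg (sq_nonneg (z j)) hD0.le)]
      have e1 : (d j / D) ^ 2 * z j ^ 2 = d j ^ 2 * z j ^ 2 * D / D ^ 3 := by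
        field_simp
      have e2 : q * μ / D * (c j * z j ^ 2) = q * μ * (c j * z j ^ 2) * D ^ 2 / D ^ 3 := by
        field_simp
      rw [e1, e2]
      exact div_le_div_of_nonneg_right key (pow_pos hD0 3).le
    have hC : ∑ i, c i ≤ q * D / μ := by
      calc ∑ i, c i ≤ ∑ i, q * d i / μ := by
            refine Finset.sum_le_sum fun i _ => ?_
            rw [le_div_iff₀ hμ]
            linarith [hlo i]
        _ = q * D / μ := by rw [← Finset.sum_div, ← Finset.mul_sum, ← hD]
    have e3 : ∑ i, ∑ j, ((1 + q) * (c i * (d j / D) ^ 2 * z i ^ 2)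
          + (1 + 1 / q) * (c i * (d j / D) ^ 2 * z j ^ 2))
        = (1 + q) * (S * ∑ j, (d j / D) ^ 2)
          + (1 + 1 / q) * ((∑ i, c i) * ∑ j, (d j / D) ^ 2 * z j ^ 2) := by
      rw [hS, Finset.sum_mul_sum, Finset.sum_mul_sum, Finset.mul_sum, Finset.mul_sum,
        ← Finset.sum_add_distrib]
      refine Finset.sum_congr rfl fun i _ => ?_
      rw [Finset.mul_sum, Finset.mul_sum, ← Finset.sum_add_distrib]
      exact Finset.sum_congr rfl fun j _ => by ring
    calc ∑ i, ∑ j, c i * (d j / D) ^ 2 * (t i - t j) ^ 2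
        ≤ ∑ i, ∑ j, ((1 + q) * (c i * (d j / D) ^ 2 * z i ^ 2)
            + (1 + 1 / q) * (c i * (d j / D) ^ 2 * z j ^ 2)) :=
          Finset.sum_le_sum fun i _ => Finset.sum_le_sum fun j _ => hA i j
      _ = (1 + q) * (S * ∑ j, (d j / D) ^ 2)
            + (1 + 1 / q) * ((∑ i, c i) * ∑ j, (d j / D) ^ 2 * z j ^ 2) := e3
      _ ≤ (1 + q) * (S * 1) + (1 + 1 / q) * ((q * D / μ) * (q * μ / D * S)) := by
          have h1q : (0:ℝ) ≤ 1 + 1 / q := by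
            have := one_div_pos.mpr hq0; linarith
          refine add_le_add
            (mul_le_mul_of_nonneg_left (mul_le_mul_of_nonneg_left hbeta hS0) (by linarith))
            (mul_le_mul_of_nonneg_left ?_ h1q)
          exact mul_le_mul hC hG hG0 (div_pos (mul_pos hq0 hD0) hμ).le
      _ = (1 + q) ^ 2 * S := by field_simp; ring
  · -- part B
    have hzsum : ∑ i, d i * z i = 0 := by
      have h1 : ∑ i, d i * z i = (∑ i, d i * t i) - (∑ i, d i) * (T / D) := by
        simp only [hz]
        rw [Finset.sum_mul, ← Finset.sum_sub_distrib]
        exact Finset.sum_congr rfl fun i _ => by ring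
      rw [h1, ← hT, ← hD]
      field_simp
      ring
    have hBterm : ∀ i, (3 - 2 * q) * (c i * p ^ 2) + ((3 - q) / 2) * (c i * z i ^ 2)
        + (2 * p / μ) * (d i * z i) ≤ c i * (p + z i) ^ 2 := by
      intro i
      have hμc : 0 < μ * c i := mul_pos hμ (hc i)
      have ha1 : μ * c i - d i ≤ (q - 1) * (μ * c i) := by
        nlinarith [hlo i, mul_nonneg hμc.le (sq_nonneg (q - 1)), hq0, hμc]
      have ha2 : d i - μ * c i ≤ (q - 1) * (μ * c i) := by nlinarith [hhi i]
      have key : 0 ≤ 2 * p * ((μ * c i - d i) * z i)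
          + ((q - 1) * (μ * c i)) * (2 * p ^ 2 + z i ^ 2 / 2) := by
        nlinarith [mul_nonneg (by linarith : (0:ℝ) ≤ (q - 1) * (μ * c i) - (μ * c i - d i))
            (sq_nonneg (2 * p - z i)),
          mul_nonneg (by linarith : (0:ℝ) ≤ (q - 1) * (μ * c i) + (μ * c i - d i))
            (sq_nonneg (2 * p + z i))]
      have h2 : 0 ≤ μ * (c i * (p + z i) ^ 2 - ((3 - 2 * q) * (c i * p ^ 2)
          + ((3 - q) / 2) * (c i * z i ^ 2) + (2 * p / μ) * (d i * z i))) := by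
        have expand : μ * (c i * (p + z i) ^ 2 - ((3 - 2 * q) * (c i * p ^ 2)
            + ((3 - q) / 2) * (c i * z i ^ 2) + (2 * p / μ) * (d i * z i)))
            = 2 * p * ((μ * c i - d i) * z i)
              + ((q - 1) * (μ * c i)) * (2 * p ^ 2 + z i ^ 2 / 2) := by
          field_simp
          ring
        rw [expand]; exact key
      nlinarith [h2, hμ]
    calc (3 - 2 * q) * (∑ i, c i * p ^ 2) + ((3 - q) / 2) * S
        = ∑ i, ((3 - 2 * q) * (c i * p ^ 2) + ((3 - q) / 2) * (c i * z i ^ 2)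
            + (2 * p / μ) * (d i * z i)) := by
          rw [Finset.sum_add_distrib, Finset.sum_add_distrib, ← Finset.mul_sum,
            ← Finset.mul_sum, ← Finset.mul_sum, hzsum, mul_zero, add_zero, ← hS]
      _ ≤ ∑ i, c i * (p + z i) ^ 2 := Finset.sum_le_sum fun i _ => hBterm i






/-- norm bounds for the multi-commodity IPM step. With
`d_i = x̄_i/s̄_i` (entrywise), `d_Σ = ∑_{i=1}^{k+1} d_i`, `v_{k+1} = 0`,
`x̄_i(e)·s̄_i(e) ≈_{1/5} μ` for all `i, e`, and the hypothesis
`∑_i ‖(1/s̄_i)(w + ∑_j (d_j/d_Σ) A(v_i − v_j))‖₂² ≤ ε²`, one has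
`∑_{i,j} ‖(1/s̄_i)(d_j/d_Σ) A(v_i − v_j)‖₂² ≤ 6ε²` and `∑_i ‖w/s̄_i‖₂² ≤ 2ε²`. -/
theorem commodity_ipm_norm_bounds {m n k : ℕ} (hk : 1 ≤ k)
    (A : Matrix (Fin m) (Fin n) ℝ)
    (v : Fin (k + 1) → Fin n → ℝ) (hvlast : v (Fin.last k) = 0)
    (w : Fin m → ℝ)
    (xb sb : Fin (k + 1) → Fin m → ℝ)
    (hxb : ∀ i e, 0 < xb i e) (hsb : ∀ i e, 0 < sb i e)
    (μ : ℝ) (hμ : 0 < μ)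
    (hcentered : ∀ i e, approx (1 / 5) (xb i e * sb i e) μ)
    (ε : ℝ) (hε : 0 ≤ ε)
    (hyp : ∑ i, ∑ e,
        ((1 / sb i e) *
          (w e + ∑ j, (xb j e / sb j e) / (∑ l, xb l e / sb l e) *
            (A *ᵥ (v i - v j)) e)) ^ 2 ≤ ε ^ 2) :
    (∑ i, ∑ j, ∑ e,
        ((1 / sb i e) * ((xb j e / sb j e) / (∑ l, xb l e / sb l e)) *
          (A *ᵥ (v i - v j)) e) ^ 2 ≤ 6 * ε ^ 2) ∧
    (∑ i, ∑ e, (w e / sb i e) ^ 2 ≤ 2 * ε ^ 2) := by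
  -- numeric facts about q = exp(1/5)
  set q : ℝ := Real.exp (1 / 5) with hqdef
  have hq0 : 0 < q := Real.exp_pos _
  have hq1 : (1:ℝ) ≤ q := by
    rw [hqdef, ← Real.exp_zero]
    exact Real.exp_le_exp.mpr (by norm_num)
  have hq123 : q ≤ 1.23 := by
    have h5 : q ^ (5:ℕ) = Real.exp 1 := by
      rw [hqdef, ← Real.exp_nat_mul]; norm_num
    by_contra h
    push_neg at h
    have h2 : (1.23:ℝ) ^ (5:ℕ) < q ^ (5:ℕ) := by gcongr <;> norm_num
    rw [h5] at h2
    have h3 := Real.exp_one_lt_d9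
    norm_num at h2
    linarith
  -- centering bounds
  have hcent := hcentered
  simp only [approx] at hcent
  have hlo : ∀ (e : Fin m) (i : Fin (k+1)),
      μ * (1 / sb i e) ^ 2 ≤ q * (xb i e / sb i e) := by
    intro e i
    have hs := hsb i e
    have h2 : μ ≤ q * (xb i e * sb i e) := (hcent i e).2
    have e1 : μ * (1 / sb i e) ^ 2 = μ / sb i e ^ 2 := by ring
    have e2 : q * (xb i e / sb i e) = q * xb i e * sb i e / sb i e ^ 2 := by
      field_simp
    rw [e1, e2]
    refine div_le_div_of_nonneg_right ?_ (by positivity)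
    nlinarith [h2]
  have hhi : ∀ (e : Fin m) (i : Fin (k+1)),
      xb i e / sb i e ≤ q * (μ * (1 / sb i e) ^ 2) := by
    intro e i
    have hs := hsb i e
    have h1 : Real.exp (-(1/5)) * (xb i e * sb i e) ≤ μ := (hcent i e).1
    have hqexp : q * Real.exp (-(1/5)) = 1 := by
      rw [hqdef, ← Real.exp_add]; norm_num
    have h1' : xb i e * sb i e ≤ q * μ := by
      have hrw : xb i e * sb i e = q * (Real.exp (-(1/5)) * (xb i e * sb i e)) := by
        rw [← mul_assoc, hqexp, one_mul]
      rw [hrw]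
      exact mul_le_mul_of_nonneg_left h1 hq0.le
    have e1 : xb i e / sb i e = xb i e * sb i e / sb i e ^ 2 := by
      field_simp
    have e2 : q * (μ * (1 / sb i e) ^ 2) = q * μ / sb i e ^ 2 := by ring
    rw [e1, e2]
    exact div_le_div_of_nonneg_right h1' (by positivity)
  -- per-coordinate application of the core lemma
  have hcore := fun e : Fin m =>
    core_ipm (fun i => (1 / sb i e) ^ 2) (fun i => xb i e / sb i e)
      (fun i => by have := hsb i e; positivity) (fun i => div_pos (hxb i e) (hsb i e))
      μ q hμ hq1 (hlo e) (hhi e) (w e) (fun i => (A *ᵥ v i) e)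
  have hDpos : ∀ e : Fin m, 0 < ∑ l, xb l e / sb l e := fun e =>
    Finset.sum_pos (fun l _ => div_pos (hxb l e) (hsb l e)) Finset.univ_nonempty
  have hmv : ∀ (i j : Fin (k+1)) (e : Fin m),
      (A *ᵥ (v i - v j)) e = (A *ᵥ v i) e - (A *ᵥ v j) e := by
    intro i j e
    rw [Matrix.mulVec_sub]
    rfl
  -- canonicalize the hypothesis
  have hyp' : ∑ e, ∑ i, ((1 / sb i e) * (w e + ∑ j,
      (xb j e / sb j e) / (∑ l, xb l e / sb l e) * (A *ᵥ (v i - v j)) e)) ^ 2 ≤ ε ^ 2 := by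
    rw [Finset.sum_comm]; exact hyp
  have hyp2 : ∑ e, ∑ i, (1 / sb i e) ^ 2 * (w e + ((A *ᵥ v i) e
      - (∑ j, (xb j e / sb j e) * (A *ᵥ v j) e) / ∑ l, xb l e / sb l e)) ^ 2 ≤ ε ^ 2 := by
    refine le_trans (le_of_eq (Finset.sum_congr rfl fun e _ =>
      Finset.sum_congr rfl fun i _ => ?_)) hyp'
    have h1 : ∀ j : Fin (k+1),
        (xb j e / sb j e) / (∑ l, xb l e / sb l e) * (A *ᵥ (v i - v j)) e
        = (xb j e / sb j e) / (∑ l, xb l e / sb l e) * (A *ᵥ v i) e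
          - (xb j e / sb j e) * (A *ᵥ v j) e / (∑ l, xb l e / sb l e) := by
      intro j; rw [hmv i j e]; ring
    have hin : ∑ j, (xb j e / sb j e) / (∑ l, xb l e / sb l e) * (A *ᵥ (v i - v j)) e
        = (A *ᵥ v i) e - (∑ j, (xb j e / sb j e) * (A *ᵥ v j) e) / ∑ l, xb l e / sb l e := by
      rw [Finset.sum_congr rfl fun j _ => h1 j, Finset.sum_sub_distrib, ← Finset.sum_mul,
        ← Finset.sum_div, ← Finset.sum_div, div_self (hDpos e).ne', one_mul]
    rw [hin]; ring
  -- global sums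
  have hPt0 : 0 ≤ ∑ e, ∑ i, (1 / sb i e) ^ 2 * (w e) ^ 2 :=
    Finset.sum_nonneg fun e _ => Finset.sum_nonneg fun i _ => by positivity
  have hSt0 : 0 ≤ ∑ e, ∑ i, (1 / sb i e) ^ 2 * ((A *ᵥ v i) e
      - (∑ j, (xb j e / sb j e) * (A *ᵥ v j) e) / ∑ l, xb l e / sb l e) ^ 2 :=
    Finset.sum_nonneg fun e _ => Finset.sum_nonneg fun i _ => by positivity
  have hBsum : (3 - 2 * q) * (∑ e, ∑ i, (1 / sb i e) ^ 2 * (w e) ^ 2)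
      + ((3 - q) / 2) * (∑ e, ∑ i, (1 / sb i e) ^ 2 * ((A *ᵥ v i) e
        - (∑ j, (xb j e / sb j e) * (A *ᵥ v j) e) / ∑ l, xb l e / sb l e) ^ 2) ≤ ε ^ 2 := by
    calc (3 - 2 * q) * (∑ e, ∑ i, (1 / sb i e) ^ 2 * (w e) ^ 2)
          + ((3 - q) / 2) * (∑ e, ∑ i, (1 / sb i e) ^ 2 * ((A *ᵥ v i) e
            - (∑ j, (xb j e / sb j e) * (A *ᵥ v j) e) / ∑ l, xb l e / sb l e) ^ 2)
        = ∑ e, ((3 - 2 * q) * (∑ i, (1 / sb i e) ^ 2 * (w e) ^ 2)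
            + ((3 - q) / 2) * (∑ i, (1 / sb i e) ^ 2 * ((A *ᵥ v i) e
              - (∑ j, (xb j e / sb j e) * (A *ᵥ v j) e) / ∑ l, xb l e / sb l e) ^ 2)) := by
          rw [Finset.mul_sum, Finset.mul_sum, ← Finset.sum_add_distrib]
      _ ≤ ∑ e, ∑ i, (1 / sb i e) ^ 2 * (w e + ((A *ᵥ v i) e
            - (∑ j, (xb j e / sb j e) * (A *ᵥ v j) e) / ∑ l, xb l e / sb l e)) ^ 2 :=
          Finset.sum_le_sum fun e _ => (hcore e).2
      _ ≤ ε ^ 2 := hyp2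
  constructor
  · -- claim 1
    have hSt2 : ((3 - q) / 2) * (∑ e, ∑ i, (1 / sb i e) ^ 2 * ((A *ᵥ v i) e
        - (∑ j, (xb j e / sb j e) * (A *ᵥ v j) e) / ∑ l, xb l e / sb l e) ^ 2) ≤ ε ^ 2 := by
      have hstep : 0 ≤ (3 - 2 * q) * (∑ e, ∑ i, (1 / sb i e) ^ 2 * (w e) ^ 2) :=
        mul_nonneg (by linarith) hPt0
      linarith [hBsum]
    calc ∑ i, ∑ j, ∑ e, ((1 / sb i e) * ((xb j e / sb j e) / (∑ l, xb l e / sb l e)) *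
            (A *ᵥ (v i - v j)) e) ^ 2
        = ∑ e, ∑ i, ∑ j, ((1 / sb i e) * ((xb j e / sb j e) / (∑ l, xb l e / sb l e)) *
            (A *ᵥ (v i - v j)) e) ^ 2 :=
          (Finset.sum_congr rfl fun i _ => Finset.sum_comm).trans Finset.sum_comm
      _ = ∑ e, ∑ i, ∑ j, (1 / sb i e) ^ 2 * ((xb j e / sb j e) / (∑ l, xb l e / sb l e)) ^ 2 *
            ((A *ᵥ v i) e - (A *ᵥ v j) e) ^ 2 :=
          Finset.sum_congr rfl fun e _ => Finset.sum_congr rfl fun i _ =>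
            Finset.sum_congr rfl fun j _ => by rw [hmv i j e]; ring
      _ ≤ ∑ e, (1 + q) ^ 2 * ∑ i, (1 / sb i e) ^ 2 * ((A *ᵥ v i) e
            - (∑ j, (xb j e / sb j e) * (A *ᵥ v j) e) / ∑ l, xb l e / sb l e) ^ 2 :=
          Finset.sum_le_sum fun e _ => (hcore e).1
      _ = (1 + q) ^ 2 * ∑ e, ∑ i, (1 / sb i e) ^ 2 * ((A *ᵥ v i) e
            - (∑ j, (xb j e / sb j e) * (A *ᵥ v j) e) / ∑ l, xb l e / sb l e) ^ 2 := by
          rw [Finset.mul_sum]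
      _ ≤ 6 * ε ^ 2 := by
          have h8 : 0 ≤ (8 - 5 * q - q ^ 2) * (∑ e, ∑ i, (1 / sb i e) ^ 2 * ((A *ᵥ v i) e
              - (∑ j, (xb j e / sb j e) * (A *ᵥ v j) e) / ∑ l, xb l e / sb l e) ^ 2) :=
            mul_nonneg (by nlinarith) hSt0
          nlinarith [hSt2, h8, hSt0]
  · -- claim 2
    have hPt2 : (∑ e, ∑ i, (1 / sb i e) ^ 2 * (w e) ^ 2) ≤ 2 * ε ^ 2 := by
      have hstep1 : 0 ≤ ((3 - q) / 2) * (∑ e, ∑ i, (1 / sb i e) ^ 2 * ((A *ᵥ v i) e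
          - (∑ j, (xb j e / sb j e) * (A *ᵥ v j) e) / ∑ l, xb l e / sb l e) ^ 2) :=
        mul_nonneg (by linarith) hSt0
      have hstep2 : 0 ≤ (5 / 2 - 2 * q) * (∑ e, ∑ i, (1 / sb i e) ^ 2 * (w e) ^ 2) :=
        mul_nonneg (by linarith) hPt0
      nlinarith [hBsum, hstep1, hstep2]
    calc ∑ i, ∑ e, (w e / sb i e) ^ 2
        = ∑ e, ∑ i, (1 / sb i e) ^ 2 * (w e) ^ 2 :=
          Finset.sum_comm.trans (Finset.sum_congr rfl fun e _ =>
            Finset.sum_congr rfl fun i _ => by ring)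
      _ ≤ 2 * ε ^ 2 := hPt2
end

section
/- Let n ≥ 1, let ε ∈ (0, 0.1], let U, Z > 0 and μ > 0, and let x, s, ŝ ∈ ℝ^n with 0 < x_i ≤ U for all i, with x_i s_i ≈_ε μ for all i, with |ŝ_i − s_i| ≤ Z for all i, and with μ ≥ 10·U·Z/ε. Then ŝ is entrywise positive and x_i ŝ_i ≈_{2ε} μ for all i. -/
/-- centrality is preserved under a bounded perturbation of the slack.
If `0 < x_i ≤ U`, `x_i s_i ≈_ε μ`, `|ŝ_i − s_i| ≤ Z` for all `i`, and `μ ≥ 10·U·Z/ε`,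
then `ŝ` is entrywise positive and `x_i ŝ_i ≈_{2ε} μ` for all `i`. -/
theorem slack_perturbation_centered {n : ℕ} (hn : 1 ≤ n)
    (ε : ℝ) (hε0 : 0 < ε) (hε1 : ε ≤ 0.1)
    (U Z μ : ℝ) (hU : 0 < U) (hZ : 0 < Z) (hμ : 0 < μ)
    (x s shat : Fin n → ℝ)
    (hx0 : ∀ i, 0 < x i) (hxU : ∀ i, x i ≤ U)
    (hxs : ∀ i, approx ε (x i * s i) μ)
    (hperturb : ∀ i, |shat i - s i| ≤ Z)
    (hμbig : 10 * U * Z / ε ≤ μ) :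
    (∀ i, 0 < shat i) ∧ ∀ i, approx (2 * ε) (x i * shat i) μ := by
  have hUZ : U * Z ≤ ε * μ / 10 := by
    rw [div_le_iff₀ hε0] at hμbig; nlinarith
  have hEpos : (0:ℝ) < Real.exp ε := Real.exp_pos _
  have hE2pos : (0:ℝ) < Real.exp (2*ε) := Real.exp_pos _
  have hEnpos : (0:ℝ) < Real.exp (-ε) := Real.exp_pos _
  have hEn2pos : (0:ℝ) < Real.exp (-(2*ε)) := Real.exp_pos _
  have hE1 : ε + 1 ≤ Real.exp ε := Real.add_one_le_exp ε
  have hE2 : -(2*ε) + 1 ≤ Real.exp (-(2*ε)) := Real.add_one_le_exp _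
  have hEne : Real.exp (-ε) * Real.exp ε = 1 := by
    rw [← Real.exp_add]; simp
  have hEn2e : Real.exp (-(2*ε)) * Real.exp (2*ε) = 1 := by
    rw [← Real.exp_add]; simp
  have hExp2 : Real.exp (2*ε) = Real.exp ε * Real.exp ε := by
    rw [← Real.exp_add]; ring_nf
  have hEn2en : Real.exp (-(2*ε)) * Real.exp ε = Real.exp (-ε) := by
    rw [← Real.exp_add]; ring_nf
  -- bounds on x i * s i
  have hbounds : ∀ i, μ * Real.exp (-ε) ≤ x i * s i ∧ x i * s i ≤ μ * Real.exp ε := by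
    intro i
    obtain ⟨h1, h2⟩ := hxs i
    constructor
    · nlinarith [mul_le_mul_of_nonneg_left h2 hEnpos.le]
    · nlinarith [mul_le_mul_of_nonneg_left h1 hEpos.le]
  -- perturbation bound
  have hd : ∀ i, |x i * shat i - x i * s i| ≤ U * Z := by
    intro i
    have h := abs_le.mp (hperturb i)
    rw [abs_le]
    constructor <;> nlinarith [hx0 i, hxU i, h.1, h.2]
  -- gap inequalities scaled by μ
  have hgap1 : ε/10 * μ ≤ (Real.exp (-ε) - Real.exp (-(2*ε))) * μ := by
    have hprod : (1 - 2*ε) * ε ≤ Real.exp (-(2*ε)) * (Real.exp ε - 1) :=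
      mul_le_mul (by linarith) (by linarith) (by nlinarith) hEn2pos.le
    have : ε/10 ≤ Real.exp (-ε) - Real.exp (-(2*ε)) := by nlinarith
    exact mul_le_mul_of_nonneg_right this hμ.le
  have hgap2 : ε/10 * μ ≤ (Real.exp (2*ε) - Real.exp ε) * μ := by
    have hprod : 1 * ε ≤ Real.exp ε * (Real.exp ε - 1) :=
      mul_le_mul (by linarith) (by linarith) hε0.le hEpos.le
    have : ε/10 ≤ Real.exp (2*ε) - Real.exp ε := by nlinarith
    exact mul_le_mul_of_nonneg_right this hμ.le
  -- key product bounds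
  have hlow : ∀ i, μ * Real.exp (-(2*ε)) ≤ x i * shat i := by
    intro i
    obtain ⟨hl, _⟩ := hbounds i
    have h := (abs_le.mp (hd i)).1
    linarith
  have hhigh : ∀ i, x i * shat i ≤ μ * Real.exp (2*ε) := by
    intro i
    obtain ⟨_, hr⟩ := hbounds i
    have h := (abs_le.mp (hd i)).2
    linarith
  have hshat : ∀ i, 0 < shat i := by
    intro i
    have hxs' : 0 < x i * shat i :=
      lt_of_lt_of_le (by positivity) (hlow i)
    rcases mul_pos_iff.mp hxs' with ⟨_, h⟩ | ⟨h, _⟩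
    · exact h
    · exact absurd (hx0 i) (not_lt.mpr h.le)
  refine ⟨hshat, fun i => ⟨?_, ?_⟩⟩
  · calc Real.exp (-(2*ε)) * (x i * shat i)
        ≤ Real.exp (-(2*ε)) * (μ * Real.exp (2*ε)) :=
          mul_le_mul_of_nonneg_left (hhigh i) hEn2pos.le
      _ = μ * (Real.exp (-(2*ε)) * Real.exp (2*ε)) := by ring
      _ = μ := by rw [hEn2e, mul_one]
  · calc μ = μ * (Real.exp (-(2*ε)) * Real.exp (2*ε)) := by rw [hEn2e, mul_one]
      _ = Real.exp (2*ε) * (μ * Real.exp (-(2*ε))) := by ring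
      _ ≤ Real.exp (2*ε) * (x i * shat i) :=
          mul_le_mul_of_nonneg_left (hlow i) hE2pos.le
end
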